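/- arXiv:1812.05213 — 5 statements merged into one kernel-verified Lean document; each statement's English description precedes it below -/
import Mathlib

section
/- If K is a convex body in ℝⁿ (a compact convex set with nonempty interior) and σ(K) denotes its centroid, then -(K - σ(K)) ⊆ n(K - σ(K)). -/
open MeasureTheory Set Pointwise

set_option maxHeartbeats 2000000 in
lemma minkowski_key (n : ℕ) (K : Set (EuclideanSpace ℝ (Fin n)))
    (hKcomp : IsCompact K) (hKconv : Convex ℝ K) (hKint : (interior K).Nonempty)
    (f : EuclideanSpace ℝ (Fin n) →L[ℝ] ℝ) (u : ℝ) (hu : ∀ a ∈ K, f a ≤ u)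
    (x : EuclideanSpace ℝ (Fin n)) (hx : x ∈ K) :
    ((n : ℝ) + 1) * (((volume K).toReal)⁻¹ * ∫ z in K, f z) ≤ n * u + f x := by
  have hmeasK : MeasurableSet K := hKcomp.isClosed.measurableSet
  have hVpos : 0 < (volume K).toReal :=
    ENNReal.toReal_pos (Measure.measure_pos_of_nonempty_interior volume hKint).ne' hKcomp.measure_lt_top.ne
  set V : ℝ := (volume K).toReal with hV
  set c : ℝ := V⁻¹ * ∫ z in K, f z with hc
  have hfc : ContinuousOn f K := f.continuous.continuousOn
  have hfiK : IntegrableOn (fun z => f z) K volume := hfc.integrableOn_compact hKcomp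
  have hintK : ∫ z in K, f z = c * V := by
    rw [hc]; field_simp
  obtain ⟨q, hqK, hq⟩ := hKcomp.exists_isMinOn ⟨x, hx⟩ hfc
  set m : ℝ := f q with hm
  have hmx : m ≤ f x := hq hx
  have hconst : ∀ r : ℝ, IntegrableOn (fun _ => r) K volume := fun r =>
    integrableOn_const hKcomp.measure_lt_top.ne
  have hmc : m ≤ c := by
    have h1 : ∫ _z in K, m ≤ ∫ z in K, f z :=
      setIntegral_mono_on (hconst m) hfiK hmeasK (fun z hz => hq hz)
    rw [setIntegral_const, smul_eq_mul, hintK, measureReal_def, ← hV] at h1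
    have := (mul_le_mul_iff_of_pos_right hVpos).1 (by linarith : m * V ≤ c * V)
    exact this
  have hcu : c ≤ u := by
    have h1 : ∫ z in K, f z ≤ ∫ _z in K, u :=
      setIntegral_mono_on hfiK (hconst u) hmeasK (fun z hz => hu z hz)
    rw [setIntegral_const, smul_eq_mul, hintK, measureReal_def, ← hV] at h1
    exact (mul_le_mul_iff_of_pos_right hVpos).1 (by linarith : c * V ≤ u * V)
  suffices h : ((n : ℝ) + 1) * c ≤ n * u + m by linarith
  have hn0 : (0 : ℝ) ≤ n := Nat.cast_nonneg n
  rcases eq_or_lt_of_le hmc with hmc' | hmc'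
  · have : (n : ℝ) * c ≤ n * u := mul_le_mul_of_nonneg_left hcu hn0
    linarith [hmc'.symm ▸ le_refl c]
  -- Now m < c.  Work in coordinates centered at q.
  set L : ℝ := c - m with hL
  have hLpos : 0 < L := sub_pos.2 hmc'
  set T : EuclideanSpace ℝ (Fin n) → EuclideanSpace ℝ (Fin n) := fun z => z - q with hT
  have hTmp : MeasurePreserving T volume volume := by
    have := measurePreserving_add_right (volume : Measure (EuclideanSpace ℝ (Fin n))) (-q)
    simpa [hT, sub_eq_add_neg] using this
  have hTemb : MeasurableEmbedding T := by
    have := (Homeomorph.subRight q : EuclideanSpace ℝ (Fin n) ≃ₜ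
      EuclideanSpace ℝ (Fin n)).measurableEmbedding
    exact this
  set K' : Set (EuclideanSpace ℝ (Fin n)) := T '' K with hK'
  have hK'comp : IsCompact K' := hKcomp.image (continuous_sub_right q)
  have hK'conv : Convex ℝ K' := by
    have h2 : K' = (fun z => -q + z) '' K := by
      ext v; constructor
      · rintro ⟨z, hz, rfl⟩; exact ⟨z, hz, by simp [hT, sub_eq_neg_add]⟩
      · rintro ⟨z, hz, rfl⟩; exact ⟨z, hz, by simp [hT, sub_eq_neg_add]⟩
    rw [h2]; exact hKconv.translate (-q)
  have h0K' : (0 : EuclideanSpace ℝ (Fin n)) ∈ K' := ⟨q, hqK, sub_self q⟩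
  have hfT : ∀ z : EuclideanSpace ℝ (Fin n), f (T z) = f z - m := by
    intro z; simp [hT, map_sub, hm]
  have hfK' : ∀ v ∈ K', 0 ≤ f v ∧ f v ≤ u - m := by
    rintro v ⟨z, hz, rfl⟩
    rw [hfT]
    exact ⟨sub_nonneg.2 (hq hz), sub_le_sub_right (hu z hz) m⟩
  have hK'pre : K' = (fun v => v + q) ⁻¹' K := by
    ext v
    constructor
    · rintro ⟨z, hz, rfl⟩; simpa [hT] using hz
    · intro hv; exact ⟨v + q, hv, by simp [hT]⟩
  have hvolK' : volume K' = volume K := by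
    rw [hK'pre]
    exact (measurePreserving_add_right volume q).measure_preimage hmeasK.nullMeasurableSet
  have hintK' : ∫ v in K', f v = L * V := by
    rw [hK', hTmp.setIntegral_image_emb hTemb]
    calc ∫ z in K, f (T z) = ∫ z in K, (f z - m) := by
          refine setIntegral_congr_fun hmeasK fun z _ => hfT z
      _ = (∫ z in K, f z) - ∫ _z in K, m := integral_sub hfiK (hconst m)
      _ = L * V := by rw [setIntegral_const, smul_eq_mul, hintK, hL, measureReal_def, ← hV]; ring
  -- the base and the cone over it
  set A : Set (EuclideanSpace ℝ (Fin n)) := K' ∩ f ⁻¹' {L} with hA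
  set C : Set (EuclideanSpace ℝ (Fin n)) :=
    (fun p : ℝ × EuclideanSpace ℝ (Fin n) => p.1 • p.2) '' (Icc (0:ℝ) 1 ×ˢ A) with hCdef
  have hmemC : ∀ t : ℝ, t ∈ Icc (0:ℝ) 1 → ∀ a ∈ A, t • a ∈ C :=
    fun t ht a ha => ⟨(t, a), ⟨ht, ha⟩, rfl⟩
  have hAcomp : IsCompact A :=
    hK'comp.inter_right (isClosed_singleton.preimage f.continuous)
  have hCcomp : IsCompact C :=
    (isCompact_Icc.prod hAcomp).image (continuous_fst.smul continuous_snd)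
  have hCK' : C ⊆ K' := by
    rintro _ ⟨⟨t, a⟩, ⟨ht, ha⟩, rfl⟩
    exact hK'conv.smul_mem_of_zero_mem h0K' ha.1 ht
  have hfC : ∀ v ∈ C, 0 ≤ f v ∧ f v ≤ L := by
    rintro _ ⟨⟨t, a⟩, ⟨⟨ht0, ht1⟩, haA⟩, rfl⟩
    have hfa : f a = L := haA.2
    rw [_root_.map_smul, smul_eq_mul, hfa]
    exact ⟨mul_nonneg ht0 hLpos.le, by nlinarith⟩
  have hconeC : ∀ s : ℝ, 0 ≤ s → s ≤ 1 → ∀ v ∈ C, s • v ∈ C := by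
    rintro s h0 h1 _ ⟨⟨t, a⟩, ⟨⟨ht0, ht1⟩, ha⟩, rfl⟩
    rw [smul_smul]
    exact hmemC _ ⟨mul_nonneg h0 ht0, mul_le_one₀ h1 ht0 ht1⟩ a ha
  -- there is a point of K strictly above the average level
  have hex_gt : ∃ p ∈ K, c < f p := by
    by_contra h
    push_neg at h
    obtain ⟨w₀, hw₀⟩ := hKint
    obtain ⟨w₁, hw₁i, hw₁⟩ : ∃ w₁ ∈ interior K, f w₁ < c := by
      rcases lt_or_ge (f w₀) c with h' | h'
      · exact ⟨w₀, hw₀, h'⟩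
      · have hfw₀ : f w₀ = c := le_antisymm (h w₀ (interior_subset hw₀)) h'
        refine ⟨(2⁻¹ : ℝ) • w₀ + (2⁻¹ : ℝ) • q,
          hKconv.combo_interior_closure_mem_interior hw₀
            (subset_closure hqK) (by norm_num) (by norm_num) (by norm_num), ?_⟩
        rw [map_add, _root_.map_smul, _root_.map_smul, smul_eq_mul, smul_eq_mul, hfw₀, ← hm]
        linarith
    have hnn : (0 : EuclideanSpace ℝ (Fin n) → ℝ) ≤ᵐ[volume.restrict K]
        fun z => c - f z := by
      filter_upwards [ae_restrict_mem hmeasK] with z hz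
      simpa using h z hz
    have hintzero : ∫ z in K, (c - f z) = 0 := by
      rw [integral_sub (hconst c) hfiK, setIntegral_const, smul_eq_mul, hintK, measureReal_def, ← hV]
      ring
    have hsupp : 0 < volume (Function.support (fun z => c - f z) ∩ K) := by
      have hopen : IsOpen (interior K ∩ {z | f z < c}) :=
        isOpen_interior.inter (isOpen_lt f.continuous continuous_const)
      calc (0 : ENNReal) < volume (interior K ∩ {z | f z < c}) :=
            hopen.measure_pos volume ⟨w₁, hw₁i, hw₁⟩
        _ ≤ _ := by
            refine measure_mono fun z hz => mem_inter ?_ (interior_subset hz.1)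
            exact Function.mem_support.2 (sub_pos.2 hz.2).ne'
    have := (setIntegral_pos_iff_support_of_nonneg_ae hnn
      ((hconst c).sub hfiK)).2 hsupp
    rw [hintzero] at this
    exact lt_irrefl 0 this
  obtain ⟨p, hpK, hpc⟩ := hex_gt
  -- an interior point at level `c`
  obtain ⟨w, hwi, hwc⟩ : ∃ w ∈ interior K, f w = c := by
    obtain ⟨w₀, hw₀⟩ := hKint
    rcases lt_trichotomy (f w₀) c with h' | h' | h'
    · set t : ℝ := (c - f w₀) / (f p - f w₀) with ht
      have h0 : 0 < f p - f w₀ := by linarith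
      have ht0 : 0 < t := div_pos (by linarith) h0
      have ht1 : t < 1 := (div_lt_one h0).2 (by linarith)
      refine ⟨(1 - t) • w₀ + t • p,
        hKconv.combo_interior_closure_mem_interior hw₀ (subset_closure hpK)
          (by linarith) ht0.le (by ring), ?_⟩
      rw [map_add, _root_.map_smul, _root_.map_smul, smul_eq_mul, smul_eq_mul, ht]
      field_simp
      ring
    · exact ⟨w₀, hw₀, h'⟩
    · set t : ℝ := (f w₀ - c) / (f w₀ - m) with ht
      have h0 : 0 < f w₀ - m := by linarith
      have ht0 : 0 < t := div_pos (by linarith) h0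
      have ht1 : t < 1 := (div_lt_one h0).2 (by linarith)
      refine ⟨(1 - t) • w₀ + t • q,
        hKconv.combo_interior_closure_mem_interior hw₀ (subset_closure hqK)
          (by linarith) ht0.le (by ring), ?_⟩
      rw [map_add, _root_.map_smul, _root_.map_smul, smul_eq_mul, smul_eq_mul, ht, ← hm]
      field_simp
      ring
  -- transfer it to `K'`
  have hwi' : T w ∈ interior K' := by
    have hopen : IsOpen (T '' interior K) := by
      have := (Homeomorph.subRight q).isOpenMap (interior K) isOpen_interior
      exact this
    have hsub : T '' interior K ⊆ K' := image_mono interior_subset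
    exact interior_maximal hsub hopen (mem_image_of_mem T hwi)
  have hfw' : f (T w) = L := by rw [hfT, hwc]
  set w' : EuclideanSpace ℝ (Fin n) := T w with hw'
  have hVCpos0 : 0 < volume C := by
    obtain ⟨ε, hεpos, hball⟩ := Metric.isOpen_iff.1 isOpen_interior w' hwi'
    have hballK' : Metric.ball w' ε ⊆ K' := hball.trans interior_subset
    set N : ℝ := ‖f‖ + 1 with hN
    have hNpos : 0 < N := by positivity
    have hfle : ∀ z : EuclideanSpace ℝ (Fin n), |f z| ≤ N * ‖z‖ := by
      intro z
      calc |f z| ≤ ‖f‖ * ‖z‖ := f.le_opNorm z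
        _ ≤ N * ‖z‖ := by nlinarith [norm_nonneg z]
    set W : ℝ := ‖w'‖ with hW
    have hWnn : 0 ≤ W := norm_nonneg _
    have hD : 0 < L + N * W := by positivity
    set δ : ℝ := min (L / (4 * N)) (ε * L / (8 * (L + N * W))) with hδ
    have hδpos : 0 < δ := lt_min (by positivity) (by positivity)
    have h8D : δ * (8 * (L + N * W)) ≤ ε * L := by
      have h := min_le_right (L / (4 * N)) (ε * L / (8 * (L + N * W)))
      rw [← hδ] at h
      exact (le_div_iff₀ (by positivity)).1 h
    have hNδL : N * δ ≤ L / 4 := by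
      have h := min_le_left (L / (4 * N)) (ε * L / (8 * (L + N * W)))
      rw [← hδ] at h
      have := mul_le_mul_of_nonneg_left h hNpos.le
      calc N * δ ≤ N * (L / (4 * N)) := this
        _ = L / 4 := by field_simp
    clear_value N W δ
    have hsub : Metric.ball ((2⁻¹ : ℝ) • w') δ ⊆ C := by
      intro v hv
      set e : EuclideanSpace ℝ (Fin n) := v - (2⁻¹ : ℝ) • w' with he
      have hev : ‖e‖ < δ := by
        rw [he]
        simpa [dist_eq_norm] using hv
      have hfe : |f e| ≤ N * δ := le_trans (hfle e) (by nlinarith [norm_nonneg e])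
      have hvsplit : v = e + (2⁻¹ : ℝ) • w' := by rw [he]; abel
      have hfv : f v = L / 2 + f e := by
        rw [hvsplit, map_add, _root_.map_smul, smul_eq_mul, hfw']
        ring
      set t : ℝ := f v / L with htdef
      obtain ⟨habs1, habs2⟩ := abs_le.1 hfe
      have h1 : L / 4 ≤ f v := by rw [hfv]; linarith only [habs1, hNδL, hLpos]
      have h2 : f v ≤ 3 * L / 4 := by rw [hfv]; linarith only [habs2, hNδL, hLpos]
      have htpos : 0 < t := div_pos (by linarith) hLpos
      have ht1 : t ≤ 1 := by rw [htdef, div_le_one hLpos]; linarith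
      have htinv4 : t⁻¹ ≤ 4 := by
        rw [htdef]
        have h3 : 4⁻¹ ≤ t := by
          rw [htdef, le_div_iff₀ hLpos]; linarith
        calc (f v / L)⁻¹ = t⁻¹ := by rw [htdef]
          _ ≤ (4⁻¹ : ℝ)⁻¹ := by
              apply inv_anti₀ (by norm_num) h3
          _ = 4 := by norm_num
      set a : EuclideanSpace ℝ (Fin n) := t⁻¹ • v with ha
      have hfvne : f v ≠ 0 := by
        have : (0:ℝ) < L / 4 := by positivity
        exact ne_of_gt (by linarith)
      have hfa : f a = L := by
        rw [ha, _root_.map_smul, smul_eq_mul, htdef]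
        field_simp
      have hva : v = t • a := by
        rw [ha, smul_smul, mul_inv_cancel₀ htpos.ne', one_smul]
      have hts : t = 2⁻¹ + f e / L := by
        rw [htdef, hfv]; field_simp
      have hvt : v - t • w' = e - (f e / L) • w' := by
        rw [hvsplit, hts, add_smul]
        abel
      have haw : a - w' = t⁻¹ • (v - t • w') := by
        rw [smul_sub, smul_smul, inv_mul_cancel₀ htpos.ne', one_smul, ha]
      have hnorm1 : ‖a - w'‖ ≤ t⁻¹ * (‖e‖ + |f e| / L * W) := by
        rw [haw, norm_smul, Real.norm_eq_abs, abs_of_pos (inv_pos.2 htpos), hvt]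
        refine mul_le_mul_of_nonneg_left ?_ (inv_pos.2 htpos).le
        calc ‖e - (f e / L) • w'‖ ≤ ‖e‖ + ‖(f e / L) • w'‖ := norm_sub_le _ _
          _ = ‖e‖ + |f e| / L * W := by
              rw [norm_smul, Real.norm_eq_abs, abs_div, abs_of_pos hLpos, hW]
      have hnorm2 : ‖a - w'‖ < ε := by
        have hbr : 0 ≤ ‖e‖ + |f e| / L * W := by positivity
        have h4 : t⁻¹ * (‖e‖ + |f e| / L * W) ≤ 4 * (‖e‖ + |f e| / L * W) :=
          mul_le_mul_of_nonneg_right htinv4 hbr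
        have h5 : 4 * (‖e‖ + |f e| / L * W) < ε := by
          rw [show 4 * (‖e‖ + |f e| / L * W) = 4 * (‖e‖ * L + |f e| * W) / L by
            field_simp]
          rw [div_lt_iff₀ hLpos]
          nlinarith [mul_le_mul_of_nonneg_right hfe hWnn,
            mul_lt_mul_of_pos_right hev hLpos, mul_pos hδpos hD,
            abs_nonneg (f e), norm_nonneg e]
        linarith
      have haA : a ∈ A := by
        refine ⟨hballK' ?_, hfa⟩
        rw [Metric.mem_ball, dist_eq_norm]
        exact hnorm2
      exact hva ▸ hmemC t ⟨htpos.le, ht1⟩ a haA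
    calc (0 : ENNReal) < volume (Metric.ball ((2⁻¹ : ℝ) • w') δ) :=
          Metric.measure_ball_pos volume _ hδpos
      _ ≤ volume C := measure_mono hsub
  -- integral over the cone, via layer cake
  set VC : ℝ := (volume C).toReal with hVCdef
  have hCmeas : MeasurableSet C := hCcomp.isClosed.measurableSet
  have hCfin : volume C ≠ ⊤ := hCcomp.measure_lt_top.ne
  have hVCpos : 0 < VC := ENNReal.toReal_pos hVCpos0.ne' hCfin
  have hfiC : IntegrableOn (fun v => f v) C volume :=
    f.continuous.continuousOn.integrableOn_compact hCcomp
  set I : ℝ := ∫ v in C, f v with hIdef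
  have hInn : 0 ≤ I := setIntegral_nonneg hCmeas fun v hv => (hfC v hv).1
  set h : ℝ → ℝ := fun t => (volume ({a | t < f a} ∩ C)).toReal with hhdef
  have hlayer : I = ∫ t in Ioi (0:ℝ), h t := by
    rw [hIdef]
    have hnn : 0 ≤ᵐ[volume.restrict C] fun v => f v := by
      filter_upwards [ae_restrict_mem hCmeas] with v hv
      exact (hfC v hv).1
    rw [hfiC.integral_eq_integral_meas_lt hnn]
    refine setIntegral_congr_fun measurableSet_Ioi fun t _ => ?_
    rw [measureReal_def, Measure.restrict_apply' hCmeas]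
  have hanti : Antitone h := by
    intro s t hst
    apply ENNReal.toReal_mono
    · exact ((measure_mono inter_subset_right).trans_lt hCcomp.measure_lt_top).ne
    · exact measure_mono (inter_subset_inter_left _ fun a ha => lt_of_le_of_lt hst ha)
  have hhnn : ∀ t, 0 ≤ h t := fun t => ENNReal.toReal_nonneg
  have hhub : ∀ t ∈ Ioc (0:ℝ) L, h t ≤ VC - (t / L) ^ n * VC := by
    rintro t ⟨ht0, htL⟩
    have htL' : 0 ≤ t / L := div_nonneg ht0.le hLpos.le
    have hSmeas : MeasurableSet {a : EuclideanSpace ℝ (Fin n) | t < f a} :=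
      (isOpen_lt continuous_const f.continuous).measurableSet
    have h1 : volume ({a | t < f a} ∩ C) + volume (C \ {a | t < f a}) = volume C := by
      rw [inter_comm]
      exact measure_inter_add_diff C hSmeas
    have hdiff : (t / L) • C ⊆ C \ {a | t < f a} := by
      rintro _ ⟨v, hvC, rfl⟩
      refine ⟨hconeC _ htL' ((div_le_one hLpos).2 htL) v hvC, ?_⟩
      have h2 := (hfC v hvC).2
      have h3 : f ((t / L) • v) = (t / L) * f v := by
        rw [_root_.map_smul, smul_eq_mul]
      simp only [mem_setOf_eq, not_lt, h3]
      calc (t / L) * f v ≤ (t / L) * L := by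
            exact mul_le_mul_of_nonneg_left h2 htL'
        _ = t := by field_simp
    have hvol_smul : volume ((t / L) • C) = ENNReal.ofReal ((t / L) ^ n) * volume C := by
      rw [Measure.addHaar_smul_of_nonneg volume htL', finrank_euclideanSpace_fin]
    have h2 : ENNReal.ofReal ((t / L) ^ n) * volume C ≤ volume (C \ {a | t < f a}) :=
      hvol_smul ▸ measure_mono hdiff
    have hfinS : volume ({a | t < f a} ∩ C) ≠ ⊤ :=
      ((measure_mono inter_subset_right).trans_lt hCcomp.measure_lt_top).ne
    have hfinD : volume (C \ {a | t < f a}) ≠ ⊤ :=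
      ((measure_mono diff_subset).trans_lt hCcomp.measure_lt_top).ne
    have h4 : h t + (volume (C \ {a | t < f a})).toReal = VC := by
      rw [hhdef, ← ENNReal.toReal_add hfinS hfinD, h1]
    have h5 : (t / L) ^ n * VC ≤ (volume (C \ {a | t < f a})).toReal := by
      have := ENNReal.toReal_mono hfinD h2
      rwa [ENNReal.toReal_mul, ENNReal.toReal_ofReal (pow_nonneg htL' n)] at this
    linarith
  have hzero : ∀ t ∈ Ioi L, h t = 0 := by
    intro t ht
    have : {a | t < f a} ∩ C = ∅ := by
      ext v
      simp only [mem_inter_iff, mem_setOf_eq, mem_empty_iff_false, iff_false, not_and]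
      intro hv hvc
      exact absurd hv (not_lt.2 ((hfC v hvc).2.trans (le_of_lt ht)))
    rw [hhdef]
    simp [this]
  have hIntOn1 : IntegrableOn h (Ioc (0:ℝ) L) volume := by
    refine Integrable.mono' (g := fun _ => VC)
      (integrableOn_const measure_Ioc_lt_top.ne)
      (hanti.measurable.aestronglyMeasurable).restrict ?_
    refine Filter.Eventually.of_forall fun t => ?_
    rw [Real.norm_eq_abs, abs_of_nonneg (hhnn t)]
    exact ENNReal.toReal_mono hCfin (measure_mono inter_subset_right)
  have hIntOn2 : IntegrableOn h (Ioi L) volume := by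
    rw [integrableOn_congr_fun hzero measurableSet_Ioi]
    exact integrableOn_zero
  have hint2zero : ∫ t in Ioi L, h t = 0 := by
    rw [setIntegral_congr_fun measurableSet_Ioi hzero]
    simp
  have hsplitI : ∫ t in Ioi (0:ℝ), h t = (∫ t in Ioc (0:ℝ) L, h t) + ∫ t in Ioi L, h t := by
    rw [← Ioc_union_Ioi_eq_Ioi hLpos.le]
    exact setIntegral_union (Ioc_disjoint_Ioi le_rfl) measurableSet_Ioi hIntOn1 hIntOn2
  have hgint : ∫ t in Ioc (0:ℝ) L, (VC - (t / L) ^ n * VC) = L * VC - L / (n + 1) * VC := by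
    rw [← intervalIntegral.integral_of_le hLpos.le]
    have heq : ∀ t : ℝ, VC - (t / L) ^ n * VC = VC - VC / L ^ n * t ^ n := by
      intro t; rw [div_pow]; field_simp
    simp_rw [heq]
    rw [intervalIntegral.integral_sub intervalIntegrable_const
      ((intervalIntegral.intervalIntegrable_pow n).const_mul _)]
    rw [intervalIntegral.integral_const, intervalIntegral.integral_const_mul, integral_pow]
    have hLn : L ^ n ≠ 0 := pow_ne_zero n hLpos.ne'
    have hn1 : ((n : ℝ) + 1) ≠ 0 := by positivity
    rw [sub_zero, smul_eq_mul]
    field_simp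
    ring
  have hmono : ∫ t in Ioc (0:ℝ) L, h t ≤ ∫ t in Ioc (0:ℝ) L, (VC - (t / L) ^ n * VC) := by
    refine setIntegral_mono_on hIntOn1 ?_ measurableSet_Ioc hhub
    exact (continuous_const.sub (((continuous_id.div_const L).pow n).mul
      continuous_const)).integrableOn_Ioc
  have hIbound : ((n : ℝ) + 1) * I ≤ n * (L * VC) := by
    have hle : I ≤ L * VC - L / (n + 1) * VC := by
      rw [hlayer, hsplitI, hint2zero, add_zero]
      rw [← hgint]
      exact hmono
    have hpos : (0:ℝ) < (n:ℝ) + 1 := by positivity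
    calc ((n : ℝ) + 1) * I ≤ ((n:ℝ) + 1) * (L * VC - L / (n + 1) * VC) :=
          mul_le_mul_of_nonneg_left hle hpos.le
      _ = n * (L * VC) := by field_simp; ring
  -- the enlarged cone
  set R : ℝ := (u - m) / L with hRdef
  have hR1 : 1 ≤ R := by
    rw [hRdef, le_div_iff₀ hLpos, hL, one_mul]
    linarith
  have hRpos : 0 < R := lt_of_lt_of_le one_pos hR1
  have hRLum : R * L = u - m := by rw [hRdef]; field_simp
  set CB : Set (EuclideanSpace ℝ (Fin n)) := R • C with hCB
  have hCBcomp : IsCompact CB := hCcomp.smul R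
  have hCBmeas : MeasurableSet CB := hCBcomp.isClosed.measurableSet
  have hvolCB : (volume CB).toReal = R ^ n * VC := by
    rw [hCB, Measure.addHaar_smul_of_nonneg volume hRpos.le, finrank_euclideanSpace_fin,
      ENNReal.toReal_mul, ENNReal.toReal_ofReal (pow_nonneg hRpos.le n), hVCdef]
  have hfiCB : IntegrableOn (fun v => f v) CB volume :=
    f.continuous.continuousOn.integrableOn_compact hCBcomp
  have hRn_pos : (0:ℝ) < R ^ n := pow_pos hRpos n
  have hintCB : ∫ v in CB, f v = R ^ (n + 1) * I := by
    have h1 := Measure.setIntegral_comp_smul_of_pos volume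
      (fun v : EuclideanSpace ℝ (Fin n) => f v) C hRpos
    rw [finrank_euclideanSpace_fin] at h1
    have h2 : ∀ x : EuclideanSpace ℝ (Fin n), f (R • x) = R * f x := fun x => by
      rw [_root_.map_smul, smul_eq_mul]
    simp_rw [h2] at h1
    rw [MeasureTheory.integral_const_mul, smul_eq_mul, ← hIdef] at h1
    have h4 : R ^ n * (R * I) = ∫ x in R • C, f x := by
      rw [h1, ← mul_assoc, mul_inv_cancel₀ hRn_pos.ne', one_mul]
    rw [hCB, ← h4, pow_succ]
    ring
  have hCsubCB : C ⊆ CB := by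
    intro v hv
    exact ⟨R⁻¹ • v, hconeC R⁻¹ (inv_nonneg.2 hRpos.le) (inv_le_one_of_one_le₀ hR1) v hv,
      smul_inv_smul₀ hRpos.ne' v⟩
  have hsplitCB : CB ∩ {v | f v ≤ L} = C := by
    ext v
    constructor
    · rintro ⟨⟨v', hv'C, rfl⟩, hfv⟩
      obtain ⟨⟨t, a⟩, ⟨⟨ht0, ht1⟩, haA⟩, rfl⟩ := hv'C
      have hfa : f a = L := haA.2
      have hfval : f (R • t • a) = (R * t) * L := by
        rw [_root_.map_smul, _root_.map_smul, smul_eq_mul, smul_eq_mul, hfa]; ring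
      have hfvL : (R * t) * L ≤ L := by
        have := hfv
        simp only [mem_setOf_eq, hfval] at this
        exact this
      have hRt1 : R * t ≤ 1 := by nlinarith
      have hRt0 : 0 ≤ R * t := mul_nonneg hRpos.le ht0
      show R • t • a ∈ C
      rw [smul_smul]
      exact hmemC _ ⟨hRt0, hRt1⟩ a haA
    · intro hv
      exact ⟨hCsubCB hv, (hfC v hv).2⟩
  have hKsubCB : K' ∩ {v | L < f v} ⊆ CB := by
    rintro v ⟨hvK', hvf⟩
    have hvf' : L < f v := hvf
    have hfv0 : 0 < f v := lt_trans hLpos hvf'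
    have hfvu : f v ≤ u - m := (hfK' v hvK').2
    have ht0 : 0 < L / f v := div_pos hLpos hfv0
    have ht1 : L / f v ≤ 1 := by rw [div_le_one hfv0]; exact hvf'.le
    have haK' : (L / f v) • v ∈ K' :=
      hK'conv.smul_mem_of_zero_mem h0K' hvK' ⟨ht0.le, ht1⟩
    have hfa : f ((L / f v) • v) = L := by
      rw [_root_.map_smul, smul_eq_mul]; field_simp
    have hs0 : 0 ≤ f v / (L * R) := le_of_lt (div_pos hfv0 (by positivity))
    have hs1 : f v / (L * R) ≤ 1 := by
      rw [div_le_one (by positivity), mul_comm L R, hRLum]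
      exact hfvu
    have hmem : (f v / (L * R)) • ((L / f v) • v) ∈ C :=
      hmemC _ ⟨hs0, hs1⟩ _ ⟨haK', hfa⟩
    refine ⟨_, hmem, ?_⟩
    show R • (f v / (L * R)) • (L / f v) • v = v
    rw [smul_smul, smul_smul]
    have heq1 : R * (f v / (L * R)) * (L / f v) = 1 := by field_simp
    rw [heq1, one_smul]
  -- measurability and integrability for the chain
  have hK'meas : MeasurableSet K' := hK'comp.isClosed.measurableSet
  have hSle : MeasurableSet {v : EuclideanSpace ℝ (Fin n) | f v ≤ L} :=
    (isClosed_le f.continuous continuous_const).measurableSet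
  have hSlt : MeasurableSet {v : EuclideanSpace ℝ (Fin n) | L < f v} :=
    (isOpen_lt continuous_const f.continuous).measurableSet
  have hψcont : Continuous fun v : EuclideanSpace ℝ (Fin n) => f v - L :=
    f.continuous.sub continuous_const
  have hiK' : IntegrableOn (fun v => f v - L) K' volume :=
    hψcont.continuousOn.integrableOn_compact hK'comp
  have hiCB : IntegrableOn (fun v => f v - L) CB volume :=
    hψcont.continuousOn.integrableOn_compact hCBcomp
  have hiC : IntegrableOn (fun v => f v - L) C volume := hiCB.mono_set hCsubCB
  have hfiK' : IntegrableOn (fun v => f v) K' volume :=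
    f.continuous.continuousOn.integrableOn_compact hK'comp
  have hconstK' : ∀ r : ℝ, IntegrableOn (fun _ => r) K' volume := fun r =>
    integrableOn_const hK'comp.measure_lt_top.ne
  have hconstCB : ∀ r : ℝ, IntegrableOn (fun _ => r) CB volume := fun r =>
    integrableOn_const hCBcomp.measure_lt_top.ne
  -- value of the integral over K'
  have hval0 : ∫ v in K', (f v - L) = 0 := by
    rw [integral_sub hfiK' (hconstK' L), setIntegral_const, smul_eq_mul, hintK', measureReal_def, hvolK', ← hV]
    ring
  -- split over K'
  have hsplitK' : ∫ v in K', (f v - L) =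
      (∫ v in K' ∩ {v | f v ≤ L}, (f v - L)) + ∫ v in K' ∩ {v | L < f v}, (f v - L) := by
    have hunion : K' = (K' ∩ {v | f v ≤ L}) ∪ (K' ∩ {v | L < f v}) := by
      ext v
      constructor
      · intro hv
        rcases le_or_gt (f v) L with hle | hlt
        · exact Or.inl ⟨hv, hle⟩
        · exact Or.inr ⟨hv, hlt⟩
      · rintro (hv | hv) <;> exact hv.1
    have hdisj : Disjoint (K' ∩ {v | f v ≤ L}) (K' ∩ {v | L < f v}) := by
      refine Set.disjoint_left.2 ?_
      rintro v ⟨_, h1⟩ ⟨_, h2⟩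
      have h1' : f v ≤ L := h1
      have h2' : L < f v := h2
      exact absurd h2' (not_lt.2 h1')
    conv_lhs => rw [hunion]
    exact setIntegral_union hdisj (hK'meas.inter hSlt)
      (hiK'.mono_set inter_subset_left) (hiK'.mono_set inter_subset_left)
  -- comparison on the lower part
  have hq1 : ∫ v in K' ∩ {v | f v ≤ L}, (f v - L) ≤ ∫ v in C, (f v - L) := by
    have hgneg : ∀ S : Set (EuclideanSpace ℝ (Fin n)),
        ∫ v in S, (L - f v) = - ∫ v in S, (f v - L) := by
      intro S
      rw [← integral_neg]
      apply integral_congr_ae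
      filter_upwards with v
      ring
    have hCsub : C ⊆ K' ∩ {v | f v ≤ L} := fun v hv => ⟨hCK' hv, (hfC v hv).2⟩
    have hmono := setIntegral_mono_set (μ := volume)
      (f := fun v => L - f v) (s := C) (t := K' ∩ {v | f v ≤ L})
      ((hconstK' L).mono_set inter_subset_left |>.sub (hfiK'.mono_set inter_subset_left))
      ?_ (HasSubset.Subset.eventuallyLE hCsub)
    · rw [hgneg, hgneg] at hmono
      linarith
    · filter_upwards [ae_restrict_mem (hK'meas.inter hSle)] with v hv
      simp only [Pi.zero_apply]
      have : f v ≤ L := hv.2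
      linarith
  -- comparison on the upper part
  have hq2 : ∫ v in K' ∩ {v | L < f v}, (f v - L) ≤
      ∫ v in CB ∩ {v | L < f v}, (f v - L) := by
    refine setIntegral_mono_set (hiCB.mono_set inter_subset_left) ?_
      (HasSubset.Subset.eventuallyLE fun v hv => ⟨hKsubCB hv, hv.2⟩)
    filter_upwards [ae_restrict_mem (hCBmeas.inter hSlt)] with v hv
    simp only [Pi.zero_apply]
    have : L < f v := hv.2
    linarith
  -- split over CB
  have hsplitCB2 : ∫ v in CB, (f v - L) =
      (∫ v in C, (f v - L)) + ∫ v in CB ∩ {v | L < f v}, (f v - L) := by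
    have hunion : CB = C ∪ (CB ∩ {v | L < f v}) := by
      ext v
      constructor
      · intro hv
        rcases le_or_gt (f v) L with hle | hlt
        · exact Or.inl (by rw [← hsplitCB]; exact ⟨hv, hle⟩)
        · exact Or.inr ⟨hv, hlt⟩
      · rintro (hv | hv)
        exacts [hCsubCB hv, hv.1]
    have hdisj : Disjoint C (CB ∩ {v | L < f v}) := by
      refine Set.disjoint_left.2 ?_
      rintro v hvC ⟨_, h2⟩
      have h2' : L < f v := h2
      exact absurd h2' (not_lt.2 (hfC v hvC).2)
    conv_lhs => rw [hunion]
    exact setIntegral_union hdisj (hCBmeas.inter hSlt) hiC (hiCB.mono_set inter_subset_left)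
  -- value of the integral over CB
  have hvalCB : ∫ v in CB, (f v - L) = R ^ (n + 1) * I - L * (R ^ n * VC) := by
    rw [integral_sub hfiCB (hconstCB L), setIntegral_const, smul_eq_mul, hintCB, measureReal_def, hvolCB]
    ring
  -- the chain
  have hchain : (0:ℝ) ≤ R ^ (n + 1) * I - L * (R ^ n * VC) := by
    calc (0:ℝ) = ∫ v in K', (f v - L) := hval0.symm
      _ = (∫ v in K' ∩ {v | f v ≤ L}, (f v - L)) +
          ∫ v in K' ∩ {v | L < f v}, (f v - L) := hsplitK'
      _ ≤ (∫ v in C, (f v - L)) + ∫ v in CB ∩ {v | L < f v}, (f v - L) :=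
          add_le_add hq1 hq2
      _ = ∫ v in CB, (f v - L) := hsplitCB2.symm
      _ = R ^ (n + 1) * I - L * (R ^ n * VC) := hvalCB
  -- final arithmetic
  have hstep1 : L * VC ≤ R * I := by
    have h1 : R ^ n * (L * VC) ≤ R ^ n * (R * I) := by
      rw [pow_succ] at hchain
      nlinarith [hchain]
    exact (mul_le_mul_iff_of_pos_left hRn_pos).1 h1
  have hstep2 : ((n:ℝ) + 1) * (L * VC) ≤ n * (L * VC) * R := by
    calc ((n:ℝ) + 1) * (L * VC) ≤ ((n:ℝ) + 1) * (R * I) :=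
          mul_le_mul_of_nonneg_left hstep1 (by positivity)
      _ = R * (((n:ℝ) + 1) * I) := by ring
      _ ≤ R * ((n:ℝ) * (L * VC)) := mul_le_mul_of_nonneg_left hIbound hRpos.le
      _ = n * (L * VC) * R := by ring
  have hLVC : (0:ℝ) < L * VC := mul_pos hLpos hVCpos
  have hRn1 : ((n:ℝ) + 1) ≤ n * R := by nlinarith [hstep2, hLVC]
  have h5 : ((n:ℝ) + 1) * L ≤ n * (u - m) := by
    calc ((n:ℝ) + 1) * L ≤ (n * R) * L := mul_le_mul_of_nonneg_right hRn1 hLpos.le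
      _ = n * (R * L) := by ring
      _ = n * (u - m) := by rw [hRLum]
  rw [hL] at h5
  linarith

theorem stmt_3 (n : ℕ) (hn : 1 ≤ n) (K : Set (EuclideanSpace ℝ (Fin n)))
    (hKcomp : IsCompact K) (hKconv : Convex ℝ K) (hKint : (interior K).Nonempty)
    (σ : EuclideanSpace ℝ (Fin n))
    (hσ : σ = ((MeasureTheory.volume K).toReal)⁻¹ • ∫ x in K, x) :
    ∀ x ∈ K, ∃ y ∈ K, -(x - σ) = (n : ℝ) • (y - σ) := by
  intro x hx
  have hn0 : (0 : ℝ) < n := by exact_mod_cast hn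
  set y := σ + (n : ℝ)⁻¹ • (σ - x) with hy
  have hyK : y ∈ K := by
    by_contra hyK
    obtain ⟨f, u, hfu, huy⟩ :=
      geometric_hahn_banach_closed_point hKconv hKcomp.isClosed hyK
    have hkey := minkowski_key n K hKcomp hKconv hKint f u (fun a ha => (hfu a ha).le) x hx
    have hid : IntegrableOn (fun z : EuclideanSpace ℝ (Fin n) => z) K volume :=
      continuousOn_id.integrableOn_compact hKcomp
    have hfσ : f σ = ((volume K).toReal)⁻¹ * ∫ z in K, f z := by
      rw [hσ, _root_.map_smul, smul_eq_mul, ContinuousLinearMap.integral_comp_comm f hid]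
    have hfy : (n : ℝ) * f y = ((n : ℝ) + 1) * f σ - f x := by
      have : f y = f σ + (n : ℝ)⁻¹ * (f σ - f x) := by
        simp [hy, map_add, _root_.map_smul, map_sub, smul_eq_mul]
      rw [this]
      field_simp
      ring
    have h1 : (n : ℝ) * f y ≤ n * u := by
      rw [hfy, hfσ]
      linarith [hkey]
    have h2 : f y ≤ u := le_of_mul_le_mul_left (by linarith) hn0
    linarith
  refine ⟨y, hyK, ?_⟩
  have : y - σ = (n : ℝ)⁻¹ • (σ - x) := by simp [hy]
  rw [this, smul_smul, mul_inv_cancel₀ hn0.ne', one_smul, neg_sub]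
end

section
/- Let K be a convex body in ℝⁿ with centroid at the origin, let R = max_{x∈K} ‖x‖ and let v ∈ S^{n-1} be such that Rv ∈ K. Suppose r ≥ 1 and let Ξ₁ = {u ∈ S^{n-1} : h_K(u) < r}. Then Ξ₁ ⊆ {u ∈ S^{n-1} : |⟨u,v⟩| ≤ nr/R}. -/
open MeasureTheory Set Metric
open scoped RealInnerProductSpace

lemma hyperplane_vol_zero {n : ℕ} (u : EuclideanSpace ℝ (Fin n)) (hu : ‖u‖ = 1) (c : ℝ) :
    volume {x : EuclideanSpace ℝ (Fin n) | ⟪u, x⟫ = c} = 0 := by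
  have hu0 : u ≠ 0 := by intro h; simp [h] at hu
  have huu : ⟪u, u⟫ = 1 := by
    rw [real_inner_self_eq_norm_sq, hu]; norm_num
  set φ : EuclideanSpace ℝ (Fin n) →ₗ[ℝ] ℝ := ((innerSL ℝ u : EuclideanSpace ℝ (Fin n) →L[ℝ] ℝ) : EuclideanSpace ℝ (Fin n) →ₗ[ℝ] ℝ) with hφ
  have hker : LinearMap.ker φ ≠ ⊤ := by
    intro h
    have : φ u = 0 := by rw [← LinearMap.mem_ker, h]; trivial
    simp [hφ, huu] at this
    exact hu0 this
  set S : AffineSubspace ℝ (EuclideanSpace ℝ (Fin n)) :=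
    AffineSubspace.mk' (c • u) (LinearMap.ker φ) with hS
  have hSet : {x : EuclideanSpace ℝ (Fin n) | ⟪u, x⟫ = c} = (S : Set (EuclideanSpace ℝ (Fin n))) := by
    ext x
    simp only [mem_setOf_eq, hS, SetLike.mem_coe, AffineSubspace.mem_mk',
      LinearMap.mem_ker, vsub_eq_sub]
    have h1 : φ (x - c • u) = ⟪u, x - c • u⟫ := rfl
    rw [h1, inner_sub_right, real_inner_smul_right, huu, mul_one, sub_eq_zero]
  have hStop : S ≠ ⊤ := by
    intro h
    apply hker
    have h2 := AffineSubspace.direction_mk' (c • u) (LinearMap.ker φ)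
    rw [← hS, h, AffineSubspace.direction_top] at h2
    exact h2.symm
  rw [hSet]
  exact Measure.addHaar_affineSubspace volume S hStop


/-- The support function of a set. -/
noncomputable def suppFn {n : ℕ} (K : Set (EuclideanSpace ℝ (Fin n)))
    (u : EuclideanSpace ℝ (Fin n)) : ℝ :=
  sSup ((fun x => ⟪x, u⟫) '' K)

theorem stmt_7 (n : ℕ) (hn : 1 ≤ n) (K : Set (EuclideanSpace ℝ (Fin n)))
    (hKcomp : IsCompact K) (hKconv : Convex ℝ K) (hKint : (interior K).Nonempty)
    (hcent : ((MeasureTheory.volume K).toReal)⁻¹ • (∫ x in K, x) = (0 : EuclideanSpace ℝ (Fin n)))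
    (R : ℝ) (hR : 0 < R) (hRmax : ∀ x ∈ K, ‖x‖ ≤ R)
    (v : EuclideanSpace ℝ (Fin n)) (hv : ‖v‖ = 1) (hRv : R • v ∈ K)
    (r : ℝ) (hr : 1 ≤ r) :
    ∀ u ∈ Metric.sphere (0 : EuclideanSpace ℝ (Fin n)) 1,
      suppFn K u < r → |⟪u, v⟫| ≤ (n : ℝ) * r / R := by
  intro u hu hsupp
  have hu1 : ‖u‖ = 1 := by simpa using hu
  have hKne : K.Nonempty := hKint.mono interior_subset
  have hKmeas : MeasurableSet K := hKcomp.isClosed.measurableSet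
  have hV0 : volume K ≠ 0 := (Measure.measure_pos_of_nonempty_interior _ hKint).ne'
  have hVtop : volume K ≠ ⊤ := hKcomp.measure_lt_top.ne
  have hVpos : 0 < (volume K).toReal := ENNReal.toReal_pos hV0 hVtop
  set L : EuclideanSpace ℝ (Fin n) →L[ℝ] ℝ := innerSL ℝ u with hL
  have hLdef : ∀ x, L x = ⟪u, x⟫ := fun x => rfl
  -- min and max attained
  obtain ⟨x₀, hx₀K, hx₀min⟩ := hKcomp.exists_isMinOn hKne L.continuous.continuousOn
  obtain ⟨xM, hxMK, hxMmax⟩ := hKcomp.exists_isMaxOn hKne L.continuous.continuousOn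
  set m : ℝ := L x₀ with hm
  set M : ℝ := L xM with hMdef
  have hmin : ∀ y ∈ K, m ≤ L y := fun y hy => hx₀min hy
  have hmax : ∀ y ∈ K, L y ≤ M := fun y hy => hxMmax hy
  have hsuppM : suppFn K u = M := by
    have : (fun x : EuclideanSpace ℝ (Fin n) => ⟪x, u⟫) '' K = L '' K := by
      apply image_congr
      intro x _
      rw [hLdef, real_inner_comm]
    rw [suppFn, this]
    exact csSup_eq_of_is_forall_le_of_forall_le_imp_ge (hKne.image L)
      (by rintro y ⟨x, hx, rfl⟩; exact hmax x hx)
      (fun b hb => hb M ⟨xM, hxMK, rfl⟩)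
  have hMr : M < r := hsuppM ▸ hsupp
  -- integrability
  have hIntId : IntegrableOn (fun x => x) K volume :=
    continuousOn_id.integrableOn_compact hKcomp
  have hIzero : (∫ x in K, x) = (0 : EuclideanSpace ℝ (Fin n)) := by
    have hne : ((volume K).toReal)⁻¹ ≠ 0 := inv_ne_zero hVpos.ne'
    rcases smul_eq_zero.mp hcent with h | h
    · exact absurd h hne
    · exact h
  have hIntL : IntegrableOn (fun x => L x) K volume := L.integrable_comp hIntId
  have hILzero : (∫ x in K, L x) = 0 := by
    rw [L.integral_comp_comm hIntId, hIzero, map_zero]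
  -- M nonneg
  have hMnonneg : 0 ≤ M := by
    by_contra h
    push_neg at h
    have : (∫ x in K, L x) < 0 := by
      calc (∫ x in K, L x) ≤ ∫ _x in K, M := by
            apply setIntegral_mono_on hIntL (integrableOn_const hKcomp.measure_lt_top.ne)
              hKmeas hmax
        _ = (volume K).toReal • M := by rw [setIntegral_const]; rfl
        _ < 0 := by
            rw [smul_eq_mul]
            exact mul_neg_of_pos_of_neg hVpos h
    rw [hILzero] at this; exact lt_irrefl 0 this
  -- KEY: -m ≤ n * M
  have hkey : -m ≤ (n : ℝ) * M := by
    rcases eq_or_lt_of_le (hmin xM hxMK) with hmM | hmM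
    · -- degenerate case m = M : L is constant on K, so m = 0
      have hconst : ∀ y ∈ K, L y = m := fun y hy =>
        le_antisymm (hmM ▸ hmax y hy) (hmin y hy)
      have hintc : (∫ x in K, L x) = (volume K).toReal • m := by
        rw [setIntegral_congr_fun hKmeas hconst, setIntegral_const]; rfl
      rw [hILzero] at hintc
      have hm0 : m = 0 := by
        rcases smul_eq_zero.mp hintc.symm with h | h
        · exact absurd h hVpos.ne'
        · exact h
      rw [hm0, neg_zero]
      positivity
    · -- main case m < M
      set D : ℝ := M - m with hDdef
      have hD : 0 < D := sub_pos.mpr hmM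
      set g : EuclideanSpace ℝ (Fin n) → ℝ := fun x => L x - m with hg
      have hconstInt : IntegrableOn (fun _ : EuclideanSpace ℝ (Fin n) => m) K volume :=
        integrableOn_const hKcomp.measure_lt_top.ne
      have hgInt : Integrable g (volume.restrict K) := hIntL.sub hconstInt
      have hgnn : 0 ≤ᵐ[volume.restrict K] g := by
        rw [Filter.EventuallyLE, ae_restrict_iff' hKmeas]
        exact Filter.Eventually.of_forall fun y hy => sub_nonneg.mpr (hmin y hy)
      have hgbdd : g ≤ᵐ[volume.restrict K] fun _ => D := by
        rw [Filter.EventuallyLE, ae_restrict_iff' hKmeas]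
        exact Filter.Eventually.of_forall fun y hy => sub_le_sub_right (hmax y hy) m
      have hlayer := hgInt.integral_eq_integral_Ioc_meas_le hgnn hgbdd
      have hLHS : (∫ x in K, g x ∂volume) = -m * (volume K).toReal := by
        rw [hg]
        rw [integral_sub hIntL hconstInt, hILzero, setIntegral_const, smul_eq_mul, measureReal_def]
        ring
      -- the measure bound
      have hbound : ∀ t ∈ Ioc (0:ℝ) D,
          ((volume.restrict K) {a | t ≤ g a}).toReal
            ≤ (volume K).toReal - (t/D)^n * (volume K).toReal := by
        intro t ht
        set lam : ℝ := t / D with hlam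
        have hlam0 : 0 < lam := div_pos ht.1 hD
        have hlam1 : lam ≤ 1 := (div_le_one hD).mpr ht.2
        set B : Set (EuclideanSpace ℝ (Fin n)) := AffineMap.homothety x₀ lam '' K with hB
        set A : Set (EuclideanSpace ℝ (Fin n)) := {a | t ≤ g a} ∩ K with hA
        have hrestr : (volume.restrict K) {a | t ≤ g a} = volume A := by
          rw [Measure.restrict_apply' hKmeas]
        have hBK : B ⊆ K := by
          rintro _ ⟨y, hy, rfl⟩
          have heq : AffineMap.homothety x₀ lam y = lam • y + (1 - lam) • x₀ := by
            simp only [AffineMap.homothety_apply, vsub_eq_sub, vadd_eq_add]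
            rw [smul_sub, sub_smul, one_smul]
            abel
          rw [heq]
          exact hKconv hy hx₀K hlam0.le (by linarith) (by ring)
        have hAB : A ∩ B ⊆ {x : EuclideanSpace ℝ (Fin n) | ⟪u, x⟫ = m + t} := by
          rintro x ⟨hxA, ⟨y, hy, rfl⟩⟩
          have hle : L (AffineMap.homothety x₀ lam y) ≤ m + t := by
            have heq : AffineMap.homothety x₀ lam y = lam • y + (1 - lam) • x₀ := by
              simp only [AffineMap.homothety_apply, vsub_eq_sub, vadd_eq_add]
              rw [smul_sub, sub_smul, one_smul]
              abel
            rw [heq, map_add, L.map_smul, L.map_smul, smul_eq_mul, smul_eq_mul]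
            have h1 : lam * L y ≤ lam * M := mul_le_mul_of_nonneg_left (hmax y hy) hlam0.le
            have h2 : lam * M - lam * m = t := by
              rw [hlam, hDdef] at *
              field_simp
            linarith [h1, h2]
          obtain ⟨hxg, hxK⟩ := hxA
          have hge : m + t ≤ L (AffineMap.homothety x₀ lam y) := by
            have h3 : t ≤ g (AffineMap.homothety x₀ lam y) := hxg
            rw [hg] at h3
            simp only at h3
            linarith
          exact le_antisymm hle hge
        have hBmeas : MeasurableSet B :=
          ((hKcomp.image (AffineMap.homothety_continuous x₀ lam))).measurableSet
        have hvolB : volume B = ENNReal.ofReal (lam ^ n) * volume K := by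
          rw [hB, Measure.addHaar_image_homothety]
          congr 2
          rw [finrank_euclideanSpace_fin]
          exact abs_of_nonneg (by positivity)
        have hsum : volume A + volume B ≤ volume K := by
          have h1 : volume (A ∪ B) + volume (A ∩ B) = volume A + volume B :=
            measure_union_add_inter A hBmeas
          have h2 : volume (A ∩ B) = 0 :=
            measure_mono_null hAB (hyperplane_vol_zero u hu1 (m + t))
          have h3 : volume (A ∪ B) ≤ volume K :=
            measure_mono (union_subset inter_subset_right hBK)
          rw [h2, add_zero] at h1
          rw [← h1]; exact h3
        rw [hrestr]
        have hAfin : volume A ≠ ⊤ :=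
          ((measure_mono inter_subset_right).trans_lt hKcomp.measure_lt_top).ne
        have hBfin : volume B ≠ ⊤ :=
          ((measure_mono hBK).trans_lt hKcomp.measure_lt_top).ne
        have hlast := ENNReal.toReal_mono hVtop hsum
        rw [ENNReal.toReal_add hAfin hBfin, hvolB, ENNReal.toReal_mul,
          ENNReal.toReal_ofReal (by positivity : (0:ℝ) ≤ lam ^ n)] at hlast
        linarith [hlast]
      -- integrability of the two integrands
      set F : ℝ → ℝ := fun t => ((volume.restrict K) {a | t ≤ g a}).toReal with hF
      have hFmeas : Measurable F := by
        apply Measurable.ennreal_toReal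
        apply Antitone.measurable
        intro s t hst
        exact measure_mono (fun a ha => le_trans hst ha)
      have hFint : IntegrableOn F (Ioc 0 D) volume := by
        apply Measure.integrableOn_of_bounded (M := (volume K).toReal) measure_Ioc_lt_top.ne
          hFmeas.aestronglyMeasurable
        apply Filter.Eventually.of_forall
        intro t
        rw [Real.norm_eq_abs, abs_of_nonneg ENNReal.toReal_nonneg]
        show ((volume.restrict K) {a | t ≤ g a}).toReal ≤ (volume K).toReal
        rw [Measure.restrict_apply' hKmeas]
        exact ENNReal.toReal_mono hVtop (measure_mono inter_subset_right)
      set G : ℝ → ℝ := fun t => (volume K).toReal - (t/D)^n * (volume K).toReal with hG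
      have hGcont : Continuous G := by
        rw [hG]; fun_prop
      have hGint : IntegrableOn G (Ioc 0 D) volume := hGcont.integrableOn_Ioc
      have hmono : (∫ t in Ioc (0:ℝ) D, F t) ≤ ∫ t in Ioc (0:ℝ) D, G t :=
        setIntegral_mono_on hFint hGint measurableSet_Ioc hbound
      have hRHS : (∫ t in Ioc (0:ℝ) D, G t)
          = (volume K).toReal * (D * n / (n+1)) := by
        have h1 : ∀ t : ℝ, G t
            = (volume K).toReal - ((volume K).toReal / D^n) * t^n := by
          intro t; rw [hG]; simp only; rw [div_pow]; ring
        simp_rw [h1]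
        rw [← intervalIntegral.integral_of_le hD.le,
          intervalIntegral.integral_sub intervalIntegrable_const
            ((intervalIntegral.intervalIntegrable_pow n).const_mul _),
          intervalIntegral.integral_const,
          intervalIntegral.integral_const_mul, integral_pow]
        have hD0 : D ≠ 0 := hD.ne'
        have hn1 : ((n:ℝ)+1) ≠ 0 := by positivity
        field_simp
        rw [pow_succ]
        ring
      have hchain : -m * (volume K).toReal ≤ (volume K).toReal * (D * n / (n+1)) := by
        rw [← hLHS, ← hRHS]
        rw [hlayer]
        exact hmono
      have hfin : -m ≤ D * n / (n+1) := by
        rw [mul_comm ((volume K).toReal)] at hchain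
        exact le_of_mul_le_mul_right hchain hVpos
      rw [le_div_iff₀ (by positivity : (0:ℝ) < (n:ℝ)+1)] at hfin
      have e1 : -m * ((n:ℝ)+1) = -((n:ℝ)*m) - m := by ring
      have e2 : D * (n:ℝ) = (n:ℝ) * M - (n:ℝ) * m := by rw [hDdef]; ring
      linarith [hfin]
  -- finish
  have hmle : m ≤ R * ⟪u, v⟫ := by
    have := hmin _ hRv
    rwa [hLdef, real_inner_smul_right] at this
  have hMge : R * ⟪u, v⟫ ≤ M := by
    have := hmax _ hRv
    rwa [hLdef, real_inner_smul_right] at this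
  have hrpos : (0 : ℝ) < r := lt_of_lt_of_le one_pos hr
  have hn1 : (1 : ℝ) ≤ (n : ℝ) := by exact_mod_cast hn
  rw [le_div_iff₀ hR]
  have h1 : |R * ⟪u, v⟫| ≤ (n : ℝ) * r := by
    rw [abs_le]
    constructor
    · have hnM : (n : ℝ) * M ≤ (n : ℝ) * r := by
        apply mul_le_mul_of_nonneg_left hMr.le (by positivity)
      linarith [hmle, hkey]
    · have hrn : r ≤ (n : ℝ) * r := le_mul_of_one_le_left hrpos.le hn1
      linarith [hMge, hMr]
  calc |⟪u, v⟫| * R = |R * ⟪u, v⟫| := by rw [abs_mul, abs_of_pos hR, mul_comm]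
    _ ≤ (n : ℝ) * r := h1
end

section
/- Let Ψ : (0,∞) → (0,∞) be strictly convex, let f : S^{n-1} → (0,∞) be measurable with f > τ₁ for some τ₁ > 0, and let K be a convex body in ℝⁿ. Then the function Φ(ξ) = ∫_{S^{n-1}} Ψ(h_K(u) - ⟨ξ,u⟩) f(u) dH^{n-1}(u) is strictly convex on the interior of K. -/
open MeasureTheory Set Metric
open scoped RealInnerProductSpace

open scoped ENNReal NNReal

set_option maxHeartbeats 1000000 in
private lemma sphere_hyperplane_null' {n m : ℕ} (hnm : n = m + 1)
    (v : EuclideanSpace ℝ (Fin n)) (hv : v ≠ 0) :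
    μH[(m:ℝ)] (sphere (0 : EuclideanSpace ℝ (Fin n)) 1 ∩ {u | ⟪v, u⟫ = 0}) = 0 := by
  haveI : Fact (Module.finrank ℝ (EuclideanSpace ℝ (Fin n)) = m + 1) := ⟨by simp [hnm]⟩
  set W : Submodule ℝ (EuclideanSpace ℝ (Fin n)) := (ℝ ∙ v)ᗮ with hW
  have hrank : Module.finrank ℝ W = m := Submodule.finrank_orthogonal_span_singleton hv
  have himg : sphere (0 : EuclideanSpace ℝ (Fin n)) 1 ∩ {u | ⟪v, u⟫ = 0}
      = Subtype.val '' (sphere (0 : W) 1) := by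
    ext u
    simp only [mem_inter_iff, mem_sphere_zero_iff_norm, mem_setOf_eq, mem_image]
    constructor
    · rintro ⟨hu1, hu2⟩
      exact ⟨⟨u, Submodule.mem_orthogonal_singleton_iff_inner_right.2 hu2⟩,
        by simpa [mem_sphere_zero_iff_norm] using hu1, rfl⟩
    · rintro ⟨w, hw, rfl⟩
      refine ⟨by simpa [mem_sphere_zero_iff_norm] using hw,
        Submodule.mem_orthogonal_singleton_iff_inner_right.1 w.2⟩
  rw [himg]
  have hiso : Isometry (Subtype.val : W → EuclideanSpace ℝ (Fin n)) := W.subtypeₗᵢ.isometry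
  rw [hiso.hausdorffMeasure_image (Or.inl (by positivity))]
  rcases Nat.eq_zero_or_pos m with hm | hm
  · have : (sphere (0 : W) 1) = ∅ := by
      haveI : Subsingleton W := by
        rw [← Module.finrank_zero_iff (R := ℝ), hrank, hm]
      ext x
      simp only [mem_sphere_zero_iff_norm, mem_empty_iff_false, iff_false]
      rw [Subsingleton.elim x 0]
      simp
    simp [this]
  · haveI : Nontrivial W := by
      apply Module.nontrivial_of_finrank_pos (R := ℝ); omega
    rw [← hrank]
    exact Measure.addHaar_sphere μH[Module.finrank ℝ W] _ _

set_option maxHeartbeats 1000000 in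
private lemma sphere_measure_pos' {n m : ℕ} (hnm : n = m + 1)
    (v : EuclideanSpace ℝ (Fin n)) (hv : v ≠ 0) :
    0 < μH[(m:ℝ)] (sphere (0 : EuclideanSpace ℝ (Fin n)) 1) := by
  haveI : Fact (Module.finrank ℝ (EuclideanSpace ℝ (Fin n)) = m + 1) := ⟨by simp [hnm]⟩
  set W : Submodule ℝ (EuclideanSpace ℝ (Fin n)) := (ℝ ∙ v)ᗮ with hW
  have hrank : Module.finrank ℝ W = m := Submodule.finrank_orthogonal_span_singleton hv
  set P := Submodule.orthogonalProjectionOnto W with hP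
  have hlip : LipschitzWith 1 (P : EuclideanSpace ℝ (Fin n) → W) := by
    apply LipschitzWith.of_dist_le_mul
    intro x y
    rw [dist_eq_norm, dist_eq_norm, ← map_sub]
    refine le_trans ((P : EuclideanSpace ℝ (Fin n) →L[ℝ] W).le_opNorm _) ?_
    have h1 := Submodule.orthogonalProjectionOnto_norm_le W
    have h2 := norm_nonneg (x - y)
    push_cast
    nlinarith
  have himg : closedBall (0 : W) 1 ⊆ P '' (sphere (0 : EuclideanSpace ℝ (Fin n)) 1) := by
    intro w hw
    rw [mem_closedBall, dist_zero_right] at hw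
    set c := Real.sqrt (1 - ‖w‖ ^ 2) with hc
    have hc0 : 0 ≤ 1 - ‖w‖ ^ 2 := by nlinarith [norm_nonneg w]
    have hcnn : 0 ≤ c := Real.sqrt_nonneg _
    have hcsq : c ^ 2 = 1 - ‖w‖ ^ 2 := Real.sq_sqrt hc0
    set v' : EuclideanSpace ℝ (Fin n) := ‖v‖⁻¹ • v with hv'
    have hv'norm : ‖v'‖ = 1 := norm_smul_inv_norm hv
    have hv'mem : v' ∈ (ℝ ∙ v) := Submodule.smul_mem _ _ (Submodule.mem_span_singleton_self v)
    have horth : ⟪(w : EuclideanSpace ℝ (Fin n)), v'⟫ = 0 := by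
      have h : (w : EuclideanSpace ℝ (Fin n)) ∈ (ℝ ∙ v)ᗮ := w.2
      rw [Submodule.mem_orthogonal] at h
      rw [real_inner_comm]
      exact h v' hv'mem
    have hnw : ‖(w : EuclideanSpace ℝ (Fin n))‖ = ‖w‖ := rfl
    refine ⟨(w : EuclideanSpace ℝ (Fin n)) + c • v', ?_, ?_⟩
    · rw [mem_sphere_zero_iff_norm]
      have hsq : ‖(w : EuclideanSpace ℝ (Fin n)) + c • v'‖ ^ 2 = 1 := by
        rw [norm_add_sq_real, real_inner_smul_right, horth, mul_zero, norm_smul,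
          Real.norm_eq_abs, abs_of_nonneg hcnn, hv'norm, mul_one, hnw]
        nlinarith
      rw [← Real.sqrt_one, ← hsq, Real.sqrt_sq (norm_nonneg _)]
    · have h1 : P (w : EuclideanSpace ℝ (Fin n)) = w :=
        Submodule.orthogonalProjectionOnto_mem_subspace_eq_self w
      have h2 : P v' = 0 := by
        apply Submodule.orthogonalProjectionOnto_apply_of_mem_orthogonal
        have : (ℝ ∙ v) = Wᗮ := (Submodule.orthogonal_orthogonal (ℝ ∙ v)).symm
        exact this ▸ hv'mem
      rw [map_add, h1, P.map_smul, h2, smul_zero, add_zero]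
  have h1 : (0 : ℝ≥0∞) < μH[(m:ℝ)] (closedBall (0 : W) 1) := by
    rw [← hrank]
    exact measure_closedBall_pos μH[Module.finrank ℝ W] _ one_pos
  calc (0 : ℝ≥0∞) < μH[(m:ℝ)] (closedBall (0 : W) 1) := h1
    _ ≤ μH[(m:ℝ)] (P '' (sphere (0 : EuclideanSpace ℝ (Fin n)) 1)) := measure_mono himg
    _ ≤ (1 : ℝ≥0) ^ (m:ℝ) * μH[(m:ℝ)] (sphere (0 : EuclideanSpace ℝ (Fin n)) 1) :=
        hlip.hausdorffMeasure_image_le (by positivity) _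
    _ = μH[(m:ℝ)] (sphere (0 : EuclideanSpace ℝ (Fin n)) 1) := by
        simp

private lemma sphere_diff_pos' {n : ℕ} (hn : 1 ≤ n)
    (v : EuclideanSpace ℝ (Fin n)) (hv : v ≠ 0) :
    0 < μH[(n:ℝ)-1] (sphere (0 : EuclideanSpace ℝ (Fin n)) 1 \ {u | ⟪v, u⟫ = 0}) := by
  obtain ⟨m, rfl⟩ : ∃ m, n = m + 1 := ⟨n - 1, (Nat.succ_pred_eq_of_pos hn).symm⟩
  have hexp : ((m+1:ℕ):ℝ) - 1 = (m:ℝ) := by push_cast; ring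
  rw [hexp]
  have h0 : μH[(m:ℝ)] (sphere (0 : EuclideanSpace ℝ (Fin (m+1))) 1 ∩ {u | ⟪v, u⟫ = 0}) = 0 :=
    sphere_hyperplane_null' rfl v hv
  have hpos := sphere_measure_pos' rfl v hv
  by_contra h
  push_neg at h
  have h' : μH[(m:ℝ)] (sphere (0 : EuclideanSpace ℝ (Fin (m+1))) 1 \ {u | ⟪v, u⟫ = 0}) = 0 :=
    le_antisymm h zero_le
  have : μH[(m:ℝ)] (sphere (0 : EuclideanSpace ℝ (Fin (m+1))) 1) = 0 := by
    have hsplit := measure_union_le (μ := μH[(m:ℝ)])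
      (sphere (0 : EuclideanSpace ℝ (Fin (m+1))) 1 ∩ {u | ⟪v, u⟫ = 0})
      (sphere (0 : EuclideanSpace ℝ (Fin (m+1))) 1 \ {u | ⟪v, u⟫ = 0})
    rw [inter_union_diff, h0, h', add_zero] at hsplit
    exact le_antisymm hsplit zero_le
  rw [this] at hpos
  exact lt_irrefl _ hpos

private lemma suppFn_sub_pos {n : ℕ} {K : Set (EuclideanSpace ℝ (Fin n))}
    (hKcomp : IsCompact K) {ξ u : EuclideanSpace ℝ (Fin n)}
    (hξ : ξ ∈ interior K) (hu : ‖u‖ = 1) : 0 < suppFn K u - ⟪ξ, u⟫ := by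
  obtain ⟨ε, hε, hball⟩ := Metric.mem_nhds_iff.1 (mem_interior_iff_mem_nhds.1 hξ)
  have hmem : ξ + (ε/2) • u ∈ K := by
    apply hball
    rw [mem_ball_iff_norm, add_sub_cancel_left, norm_smul, Real.norm_eq_abs,
      abs_of_pos (by linarith), hu, mul_one]
    linarith
  have hbdd : BddAbove ((fun x => ⟪x, u⟫) '' K) :=
    (hKcomp.image (continuous_id.inner continuous_const)).bddAbove
  have hle : ⟪ξ + (ε/2) • u, u⟫ ≤ suppFn K u :=
    le_csSup hbdd ⟨_, hmem, rfl⟩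
  rw [inner_add_left, real_inner_smul_left, real_inner_self_eq_norm_sq, hu] at hle
  simp only [one_pow, mul_one] at hle
  linarith
theorem stmt_10 (n : ℕ) (hn : 1 ≤ n) (Ψ : ℝ → ℝ)
    (hΨ : StrictConvexOn ℝ (Set.Ioi 0) Ψ)
    (τ₁ : ℝ) (hτ₁ : 0 < τ₁) (f : EuclideanSpace ℝ (Fin n) → ℝ)
    (hfm : Measurable f)
    (hf : ∀ u ∈ Metric.sphere (0 : EuclideanSpace ℝ (Fin n)) 1, τ₁ < f u)
    (K : Set (EuclideanSpace ℝ (Fin n)))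
    (hKcomp : IsCompact K) (hKconv : Convex ℝ K) (hKint : (interior K).Nonempty)
    (hint : ∀ ξ ∈ interior K,
      MeasureTheory.IntegrableOn (fun u => Ψ (suppFn K u - ⟪ξ, u⟫) * f u)
        (Metric.sphere (0 : EuclideanSpace ℝ (Fin n)) 1) μH[(n:ℝ)-1]) :
    StrictConvexOn ℝ (interior K)
      (fun ξ => ∫ u in Metric.sphere (0 : EuclideanSpace ℝ (Fin n)) 1,
        Ψ (suppFn K u - ⟪ξ, u⟫) * f u ∂μH[(n:ℝ)-1]) := by
  constructor
  · exact hKconv.interior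
  intro ξ₁ h₁ ξ₂ h₂ hne a b ha hb hab
  have h₀ : a • ξ₁ + b • ξ₂ ∈ interior K := hKconv.interior h₁ h₂ ha.le hb.le hab
  set S := Metric.sphere (0 : EuclideanSpace ℝ (Fin n)) 1 with hS
  set μ := (μH[(n:ℝ)-1] : Measure (EuclideanSpace ℝ (Fin n))) with hμ
  have I₁ := hint ξ₁ h₁
  have I₂ := hint ξ₂ h₂
  have I₀ := hint _ h₀
  set F₁ : EuclideanSpace ℝ (Fin n) → ℝ := fun u => Ψ (suppFn K u - ⟪ξ₁, u⟫) * f u with hF₁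
  set F₂ : EuclideanSpace ℝ (Fin n) → ℝ := fun u => Ψ (suppFn K u - ⟪ξ₂, u⟫) * f u with hF₂
  set F₀ : EuclideanSpace ℝ (Fin n) → ℝ :=
    fun u => Ψ (suppFn K u - ⟪a • ξ₁ + b • ξ₂, u⟫) * f u with hF₀
  set g : EuclideanSpace ℝ (Fin n) → ℝ := fun u => a * F₁ u + b * F₂ u - F₀ u with hg
  have hIg : MeasureTheory.IntegrableOn g S μ :=
    ((I₁.const_mul a).add (I₂.const_mul b)).sub I₀
  -- pointwise facts
  have key : ∀ u ∈ S, 0 ≤ g u ∧ (⟪ξ₁ - ξ₂, u⟫ ≠ 0 → 0 < g u) := by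
    intro u hu
    have hu1 : ‖u‖ = 1 := by rwa [hS, mem_sphere_zero_iff_norm] at hu
    have ht₁ : 0 < suppFn K u - ⟪ξ₁, u⟫ := suppFn_sub_pos hKcomp h₁ hu1
    have ht₂ : 0 < suppFn K u - ⟪ξ₂, u⟫ := suppFn_sub_pos hKcomp h₂ hu1
    have hcombo : suppFn K u - ⟪a • ξ₁ + b • ξ₂, u⟫
        = a * (suppFn K u - ⟪ξ₁, u⟫) + b * (suppFn K u - ⟪ξ₂, u⟫) := by
      rw [inner_add_left, real_inner_smul_left, real_inner_smul_left]
      linear_combination (suppFn K u) * hab.symm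
    have hfu : 0 < f u := lt_trans hτ₁ (hf u hu)
    constructor
    · have hconv := hΨ.convexOn.2 (Set.mem_Ioi.2 ht₁) (Set.mem_Ioi.2 ht₂) ha.le hb.le hab
      simp only [smul_eq_mul] at hconv
      have : Ψ (suppFn K u - ⟪a • ξ₁ + b • ξ₂, u⟫)
          ≤ a * Ψ (suppFn K u - ⟪ξ₁, u⟫) + b * Ψ (suppFn K u - ⟪ξ₂, u⟫) := by
        rw [hcombo]; exact hconv
      simp only [hg, hF₀, hF₁, hF₂, sub_nonneg]
      nlinarith
    · intro hne'
      have htne : suppFn K u - ⟪ξ₁, u⟫ ≠ suppFn K u - ⟪ξ₂, u⟫ := by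
        intro hcontra
        apply hne'
        rw [inner_sub_left]
        linarith
      have hconv := hΨ.2 (Set.mem_Ioi.2 ht₁) (Set.mem_Ioi.2 ht₂) htne ha hb hab
      simp only [smul_eq_mul] at hconv
      have : Ψ (suppFn K u - ⟪a • ξ₁ + b • ξ₂, u⟫)
          < a * Ψ (suppFn K u - ⟪ξ₁, u⟫) + b * Ψ (suppFn K u - ⟪ξ₂, u⟫) := by
        rw [hcombo]; exact hconv
      simp only [hg, hF₀, hF₁, hF₂, sub_pos]
      nlinarith
  have hnn : 0 ≤ᵐ[μ.restrict S] g :=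
    MeasureTheory.ae_restrict_of_forall_mem (isClosed_sphere).measurableSet
      fun u hu => (key u hu).1
  have hpos : 0 < ∫ u in S, g u ∂μ := by
    rw [MeasureTheory.setIntegral_pos_iff_support_of_nonneg_ae hnn hIg]
    have hsub : S \ {u | ⟪ξ₁ - ξ₂, u⟫ = 0} ⊆ Function.support g ∩ S := by
      rintro u ⟨huS, hune⟩
      exact ⟨ne_of_gt ((key u huS).2 hune), huS⟩
    calc (0 : ℝ≥0∞) < μ (S \ {u | ⟪ξ₁ - ξ₂, u⟫ = 0}) :=
          sphere_diff_pos' hn (ξ₁ - ξ₂) (sub_ne_zero.2 hne)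
      _ ≤ μ (Function.support g ∩ S) := measure_mono hsub
  have hsplit : ∫ u in S, g u ∂μ
      = a * (∫ u in S, F₁ u ∂μ) + b * (∫ u in S, F₂ u ∂μ) - ∫ u in S, F₀ u ∂μ := by
    have IA1 : MeasureTheory.IntegrableOn (fun u => a * F₁ u) S μ := I₁.const_mul a
    have IA2 : MeasureTheory.IntegrableOn (fun u => b * F₂ u) S μ := I₂.const_mul b
    have IA : MeasureTheory.IntegrableOn (fun u => a * F₁ u + b * F₂ u) S μ := IA1.add IA2
    rw [hg]
    rw [MeasureTheory.integral_sub IA I₀,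
      MeasureTheory.integral_add IA1 IA2,
      integral_const_mul, integral_const_mul]
  rw [hsplit] at hpos
  simp only [smul_eq_mul]
  linarith
end

section
/- Let K be a convex body in ℝⁿ with r B^n ⊆ int K for some r > 0, let ω ⊆ S^{n-1} be closed, and for t ∈ [0, r) define K(t) = {x ∈ K : ⟨x,u⟩ ≤ h_K(u) - t for all u ∈ ω}. If S_K(ω) = 0 (the surface area measure of K assigns measure zero to ω), then lim_{t→0⁺} (V(K(t)) - V(K))/t = 0. -/
open MeasureTheory Set Metric Filter
open scoped RealInnerProductSpace Topology
open scoped ENNReal Pointwise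

lemma tube_bound {n : ℕ} (hn : 2 ≤ n) (c : EuclideanSpace ℝ (Fin n)) {R d : ℝ}
    (hc : ‖c‖ ≤ R) (hR : 0 < R) (hd : 0 ≤ d) (hdR : d ≤ 2*R) :
    volume (⋃ s ∈ Icc (1/2:ℝ) 1, closedBall (s • c) d)
      ≤ ENNReal.ofReal (7 * 2^n * R * d^(n-1)) *
        volume (closedBall (0:EuclideanSpace ℝ (Fin n)) 1) := by
  rcases eq_or_lt_of_le hd with h0 | hd
  · -- d = 0 : union is in a line
    have hsub : (⋃ s ∈ Icc (1/2:ℝ) 1, closedBall (s • c) d)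
        ⊆ (Submodule.span ℝ {c} : Submodule ℝ (EuclideanSpace ℝ (Fin n))) := by
      intro x hx
      simp only [mem_iUnion, mem_closedBall] at hx
      obtain ⟨s, _, hx⟩ := hx
      rw [← h0, dist_le_zero] at hx
      subst hx
      exact Submodule.smul_mem _ s (Submodule.mem_span_singleton_self c)
    have hne : Submodule.span ℝ ({c} : Set (EuclideanSpace ℝ (Fin n))) ≠ ⊤ := by
      intro htop
      have h1 : Module.finrank ℝ (Submodule.span ℝ ({c} : Set (EuclideanSpace ℝ (Fin n)))) ≤ 1 := by
        rcases eq_or_ne c 0 with rfl | hc0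
        · rw [Submodule.span_zero_singleton]; simp [finrank_bot]
        · rw [finrank_span_singleton hc0]
      rw [htop, finrank_top, finrank_euclideanSpace_fin] at h1
      omega
    have h2 : volume (⋃ s ∈ Icc (1/2:ℝ) 1, closedBall (s • c) d) = 0 :=
      measure_mono_null hsub (Measure.addHaar_submodule _ _ hne)
    rw [h2]; exact zero_le
  · -- d > 0
    set N : ℕ := ⌈R/d⌉₊ + 1 with hN
    have hNpos : (0:ℝ) < N := by positivity
    have hRdN : R / d ≤ N := le_trans (Nat.le_ceil _) (by exact_mod_cast Nat.le_succ _)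
    have hRN : R / (2*N) ≤ d / 2 := by
      rw [div_le_div_iff₀ (by positivity) (by norm_num)]
      have := mul_le_mul_of_nonneg_right hRdN hd.le
      rw [div_mul_cancel₀ _ hd.ne'] at this
      nlinarith
    -- covering
    have hcov : (⋃ s ∈ Icc (1/2:ℝ) 1, closedBall (s • c) d)
        ⊆ ⋃ j ∈ Finset.range (N+1), closedBall (((1/2 + j/(2*N)):ℝ) • c) (2*d) := by
      intro x hx
      simp only [mem_iUnion, mem_closedBall, Finset.mem_range] at hx ⊢
      obtain ⟨s, ⟨hs1, hs2⟩, hx⟩ := hx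
      set y : ℝ := (s - 1/2) * (2*N) with hy
      have hy0 : 0 ≤ y := by nlinarith
      set j : ℕ := ⌊y⌋₊ with hj
      have hfl : (j:ℝ) ≤ y := Nat.floor_le hy0
      have hfu : y < j + 1 := Nat.lt_floor_add_one y
      refine ⟨j, ?_, ?_⟩
      · have hyN : y ≤ (N:ℝ) := by nlinarith
        have := Nat.floor_le_floor hyN
        rw [Nat.floor_natCast] at this
        omega
      · have hsj : s - (1/2 + j/(2*N)) = (y - j)/(2*N) := by
          field_simp [hy]; ring
        have hpos : (0:ℝ) < 1/(2*N) := by positivity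
        have habs : |s - (1/2 + j/(2*N))| ≤ 1/(2*N) := by
          rw [hsj, abs_le]
          have h01 : (0:ℝ) ≤ (y - j)/(2*N) := div_nonneg (by linarith) (by positivity)
          constructor
          · linarith
          · rw [div_le_div_iff₀ (by positivity) (by positivity)]
            nlinarith
        have hdd : dist (s • c) ((1/2 + (j:ℝ)/(2*N)) • c) = |s - (1/2 + j/(2*N))| * ‖c‖ := by
          rw [dist_eq_norm, ← sub_smul, norm_smul, Real.norm_eq_abs]
        have hdd2 : |s - (1/2 + j/(2*N))| * ‖c‖ ≤ (1/(2*N)) * R :=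
          mul_le_mul habs hc (norm_nonneg _) hpos.le
        have h1 : (1/(2*N)) * R = R / (2*N) := by ring
        calc dist x ((1/2 + (j:ℝ)/(2*N)) • c)
            ≤ dist x (s • c) + dist (s • c) ((1/2 + (j:ℝ)/(2*N)) • c) := dist_triangle _ _ _
          _ ≤ d + (1/(2*N)) * R := by rw [hdd]; exact add_le_add hx hdd2
          _ ≤ 2 * d := by rw [h1]; linarith
    -- measure bound
    calc volume (⋃ s ∈ Icc (1/2:ℝ) 1, closedBall (s • c) d)
        ≤ volume (⋃ j ∈ Finset.range (N+1), closedBall (((1/2 + j/(2*N)):ℝ) • c) (2*d)) :=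
          measure_mono hcov
      _ ≤ ∑ j ∈ Finset.range (N+1), volume (closedBall (((1/2 + j/(2*N)):ℝ) • c) (2*d)) :=
          measure_biUnion_finset_le _ _
      _ = (N+1) * (ENNReal.ofReal ((2*d)^n) * volume (closedBall (0:EuclideanSpace ℝ (Fin n)) 1)) := by
          have hball : ∀ j ∈ Finset.range (N+1),
              volume (closedBall (((1/2 + j/(2*N)):ℝ) • c) (2*d))
                = ENNReal.ofReal ((2*d)^n) * volume (closedBall (0:EuclideanSpace ℝ (Fin n)) 1) :=
            fun j _ => by
              rw [Measure.addHaar_closedBall' _ _ (by positivity), finrank_euclideanSpace_fin]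
          rw [Finset.sum_congr rfl hball, Finset.sum_const, Finset.card_range, nsmul_eq_mul]
          push_cast
          ring
      _ ≤ ENNReal.ofReal (7 * 2^n * R * d^(n-1)) * volume (closedBall (0:EuclideanSpace ℝ (Fin n)) 1) := by
          rw [← mul_assoc]
          gcongr ?_ * _
          have hcast : ((N:ENNReal)+1) = ENNReal.ofReal ((N:ℝ)+1) := by
            rw [ENNReal.ofReal_add (by positivity) (by norm_num), ENNReal.ofReal_natCast,
              ENNReal.ofReal_one]
          rw [hcast, ← ENNReal.ofReal_mul (by positivity)]
          apply ENNReal.ofReal_le_ofReal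
          have hceil : (⌈R/d⌉₊:ℝ) < R/d + 1 := Nat.ceil_lt_add_one (by positivity)
          have hNle : (N:ℝ) + 1 ≤ R/d + 3 := by
            rw [hN]; push_cast; linarith
          have h2d : (2*d)^n = 2^n * d^n := by rw [mul_pow]
          have hdn : d^n = d * d^(n-1) := by
            conv_lhs => rw [show n = 1 + (n-1) by omega]
            rw [pow_add, pow_one]
          calc ((N:ℝ)+1) * (2*d)^n ≤ (R/d + 3) * (2^n * d^n) := by
                rw [← h2d]; apply mul_le_mul hNle le_rfl (by positivity) (by positivity)
            _ = 2^n * ((R/d) * d^n + 3 * d^n) := by ring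
            _ = 2^n * (R * d^(n-1) + 3 * (d * d^(n-1))) := by
                rw [hdn]; field_simp
            _ ≤ 2^n * (R * d^(n-1) + 6 * (R * d^(n-1))) := by
                have : d * d^(n-1) ≤ 2*R * d^(n-1) := by
                  apply mul_le_mul_of_nonneg_right hdR (by positivity)
                nlinarith [this, pow_pos (show (0:ℝ)<2 by norm_num) n]
            _ = 7 * 2^n * R * d^(n-1) := by ring

lemma exists_cover {n : ℕ} (d : ℝ) {A : Set (EuclideanSpace ℝ (Fin n))}
    (h : μH[d] A = 0) {ε : ℝ≥0∞} (hε : 0 < ε) :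
    ∃ t : ℕ → Set (EuclideanSpace ℝ (Fin n)), A ⊆ ⋃ m, t m ∧
      (∑' m, ⨆ _ : (t m).Nonempty, EMetric.diam (t m) ^ d) < ε := by
  rw [MeasureTheory.Measure.hausdorffMeasure_apply] at h
  have h1 : (⨅ (t : ℕ → Set (EuclideanSpace ℝ (Fin n))) (_ : A ⊆ ⋃ m, t m)
      (_ : ∀ m, EMetric.diam (t m) ≤ 1),
      ∑' m, ⨆ _ : (t m).Nonempty, EMetric.diam (t m) ^ d) < ε := by
    refine lt_of_le_of_lt ?_ hε
    calc _ ≤ _ := le_iSup₂ (f := fun (r : ℝ≥0∞) (_ : 0 < r) =>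
        ⨅ (t : ℕ → Set (EuclideanSpace ℝ (Fin n))) (_ : A ⊆ ⋃ m, t m)
          (_ : ∀ m, EMetric.diam (t m) ≤ r),
          ∑' m, ⨆ _ : (t m).Nonempty, EMetric.diam (t m) ^ d) 1 one_pos
      _ = 0 := h
  obtain ⟨t, ht⟩ := iInf_lt_iff.mp h1
  obtain ⟨hcov, ht⟩ := iInf_lt_iff.mp ht
  obtain ⟨_, ht⟩ := iInf_lt_iff.mp ht
  exact ⟨t, hcov, ht⟩

lemma halfcone_null {n : ℕ} (hn : 1 ≤ n) {A : Set (EuclideanSpace ℝ (Fin n))} {R : ℝ}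
    (hR : 0 < R) (hA : A ⊆ closedBall 0 R) (h : μH[(n:ℝ)-1] A = 0) :
    volume (⋃ s ∈ Icc (1/2:ℝ) 1, (s • A : Set (EuclideanSpace ℝ (Fin n)))) = 0 := by
  rcases lt_or_ge n 2 with hn2 | hn2
  · -- n = 1
    have hn1 : n = 1 := by omega
    subst hn1
    have hAe : A = ∅ := by
      by_contra hne
      have := MeasureTheory.Measure.one_le_hausdorffMeasure_zero_of_nonempty
        (Set.nonempty_iff_ne_empty.mpr hne)
      rw [show ((1:ℕ):ℝ)-1 = 0 by norm_num] at h
      rw [h] at this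
      simp at this
    simp [hAe]
  · -- n ≥ 2
    set κ := volume (closedBall (0:EuclideanSpace ℝ (Fin n)) 1) with hκ
    set C := ENNReal.ofReal (7 * 2^n * R) * κ with hC
    have hκfin : κ ≠ ⊤ := measure_closedBall_lt_top.ne
    have hCfin : C ≠ ⊤ := ENNReal.mul_ne_top ENNReal.ofReal_ne_top hκfin
    have key : ∀ ε : ℝ≥0∞, 0 < ε → volume (⋃ s ∈ Icc (1/2:ℝ) 1, (s • A : Set (EuclideanSpace ℝ (Fin n)))) ≤ C * ε := by
      intro ε hε
      obtain ⟨t, hcov, hsum⟩ := exists_cover ((n:ℝ)-1) h hε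
      have hsub : (⋃ s ∈ Icc (1/2:ℝ) 1, s • A)
          ⊆ ⋃ m, ⋃ s ∈ Icc (1/2:ℝ) 1, s • (t m ∩ A) := by
        intro x hx
        simp only [mem_iUnion, mem_smul_set] at hx ⊢
        obtain ⟨s, hs, a, ha, rfl⟩ := hx
        obtain ⟨m, hm⟩ := mem_iUnion.mp (hcov ha)
        exact ⟨m, s, hs, a, ⟨hm, ha⟩, rfl⟩
      refine le_trans (measure_mono hsub) (le_trans (measure_iUnion_le _) ?_)
      have hterm : ∀ m, volume (⋃ s ∈ Icc (1/2:ℝ) 1, s • (t m ∩ A))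
          ≤ C * (⨆ _ : (t m).Nonempty, EMetric.diam (t m) ^ ((n:ℝ)-1)) := by
        intro m
        rcases Set.eq_empty_or_nonempty (t m ∩ A) with he | ⟨c, hc⟩
        · simp [he]
        have hcA : c ∈ A := hc.2
        have hcR : ‖c‖ ≤ R := by
          have := hA hcA; rwa [mem_closedBall, dist_zero_right] at this
        have hbdd : Bornology.IsBounded (t m ∩ A) :=
          Metric.isBounded_closedBall.subset (fun y hy => hA hy.2)
        set dR := Metric.diam (t m ∩ A) with hdR
        have hd0 : 0 ≤ dR := Metric.diam_nonneg
        have hd2R : dR ≤ 2 * R := by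
          have h1 : t m ∩ A ⊆ closedBall 0 R := fun y hy => hA hy.2
          exact Metric.diam_le_of_subset_closedBall hR.le h1 |>.trans (by linarith)
        have hsub2 : (⋃ s ∈ Icc (1/2:ℝ) 1, s • (t m ∩ A))
            ⊆ ⋃ s ∈ Icc (1/2:ℝ) 1, closedBall (s • c) dR := by
          intro x hx
          simp only [mem_iUnion, mem_smul_set, mem_closedBall] at hx ⊢
          obtain ⟨s, hs, a, ha, rfl⟩ := hx
          refine ⟨s, hs, ?_⟩
          rw [dist_smul₀]
          calc |s| * dist a c ≤ 1 * dR := by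
                apply mul_le_mul _ (Metric.dist_le_diam_of_mem hbdd ha hc) dist_nonneg zero_le_one
                rw [abs_le]; constructor <;> [linarith [hs.1]; exact hs.2]
            _ = dR := one_mul _
        refine le_trans (measure_mono hsub2) (le_trans (tube_bound hn2 c hcR hR hd0 hd2R) ?_)
        rw [iSup_pos ⟨c, hc.1⟩]
        have hexp : EMetric.diam (t m) ^ ((n:ℝ)-1) = EMetric.diam (t m) ^ (n-1 : ℕ) := by
          rw [← ENNReal.rpow_natCast]
          congr 1
          rw [Nat.cast_sub hn, Nat.cast_one]
        have hdle : ENNReal.ofReal dR ≤ EMetric.diam (t m) := by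
          refine le_trans ?_ (EMetric.diam_mono (inter_subset_left (s := t m) (t := A)))
          exact ENNReal.ofReal_toReal_le
        calc ENNReal.ofReal (7 * 2^n * R * dR^(n-1)) * κ
            = (ENNReal.ofReal (7 * 2^n * R) * (ENNReal.ofReal dR)^(n-1)) * κ := by
              rw [ENNReal.ofReal_mul (by positivity), ENNReal.ofReal_pow hd0]
          _ ≤ (ENNReal.ofReal (7 * 2^n * R) * (EMetric.diam (t m))^(n-1)) * κ := by gcongr
          _ = C * EMetric.diam (t m) ^ ((n:ℝ)-1) := by rw [hexp, hC]; ring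
      refine le_trans (ENNReal.tsum_le_tsum hterm) ?_
      rw [ENNReal.tsum_mul_left]
      exact mul_le_mul_right hsum.le C
    -- conclude
    have : volume (⋃ s ∈ Icc (1/2:ℝ) 1, (s • A : Set (EuclideanSpace ℝ (Fin n)))) ≤ 0 := by
      refine ENNReal.le_of_forall_pos_le_add fun δ hδ _ => ?_
      have hε : (0:ℝ≥0∞) < (δ:ℝ≥0∞) / (C+1) :=
        ENNReal.div_pos (by exact_mod_cast hδ.ne') (by simp [hCfin])
      refine le_trans (key _ hε) ?_
      rw [zero_add]
      calc C * ((δ:ℝ≥0∞) / (C+1)) ≤ (C+1) * ((δ:ℝ≥0∞) / (C+1)) := by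
            gcongr; exact le_self_add
        _ = δ := ENNReal.mul_div_cancel' (by simp) (by simp [hCfin])
    exact le_antisymm this zero_le

lemma cone_null {n : ℕ} (hn : 1 ≤ n) {A : Set (EuclideanSpace ℝ (Fin n))} {R : ℝ}
    (hR : 0 < R) (hA : A ⊆ closedBall 0 R) (h : μH[(n:ℝ)-1] A = 0) :
    volume (⋃ s ∈ Ioc (0:ℝ) 1, (s • A : Set (EuclideanSpace ℝ (Fin n)))) = 0 := by
  set T := ⋃ s ∈ Icc (1/2:ℝ) 1, (s • A : Set (EuclideanSpace ℝ (Fin n))) with hT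
  have hsub : (⋃ s ∈ Ioc (0:ℝ) 1, (s • A : Set (EuclideanSpace ℝ (Fin n))))
      ⊆ ⋃ k : ℕ, (((1/2:ℝ)^k) • T : Set (EuclideanSpace ℝ (Fin n))) := by
    intro x hx
    simp only [mem_iUnion] at hx ⊢
    obtain ⟨s, ⟨hs0, hs1⟩, hx⟩ := hx
    rw [mem_smul_set] at hx
    obtain ⟨a, ha, rfl⟩ := hx
    have hex : ∃ m, (1/2:ℝ)^m < s := exists_pow_lt_of_lt_one hs0 (by norm_num)
    set m := Nat.find hex with hmdef
    have hm : (1/2:ℝ)^m < s := Nat.find_spec hex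
    have hm0 : m ≠ 0 := by
      intro h0
      rw [h0, pow_zero] at hm
      linarith
    set k := m - 1 with hk
    have hks : s ≤ (1/2:ℝ)^k := by
      by_contra hlt
      exact (Nat.find_min hex (show k < m by omega)) (lt_of_not_ge hlt)
    have hks2 : (1/2:ℝ)^(k+1) < s := by
      have : k + 1 = m := by omega
      rw [this]; exact hm
    refine ⟨k, ?_⟩
    rw [mem_smul_set]
    refine ⟨(s * 2^k) • a, ?_, ?_⟩
    · rw [hT]
      simp only [mem_iUnion]
      refine ⟨s * 2^k, ⟨?_, ?_⟩, mem_smul_set.mpr ⟨a, ha, rfl⟩⟩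
      · have h2 : (0:ℝ) < 2^k := by positivity
        have := hks2
        rw [pow_succ] at this
        have h12 : ((1/2:ℝ))^k = (2^k)⁻¹ := by
          rw [one_div, inv_pow]
        rw [h12] at this
        have h3 := mul_lt_mul_of_pos_right this h2
        rw [mul_comm ((2:ℝ)^k)⁻¹ (1/2), mul_assoc, inv_mul_cancel₀ h2.ne', mul_one] at h3
        linarith
      · have h12 : ((1/2:ℝ))^k = (2^k)⁻¹ := by rw [one_div, inv_pow]
        rw [h12] at hks
        have h2 : (0:ℝ) < 2^k := by positivity
        calc s * 2^k ≤ (2^k)⁻¹ * 2^k := by nlinarith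
          _ = 1 := inv_mul_cancel₀ h2.ne'
    · rw [smul_smul]
      congr 1
      have h12 : ((1/2:ℝ))^k = (2^k)⁻¹ := by rw [one_div, inv_pow]
      rw [h12]
      field_simp
  refine measure_mono_null hsub (measure_iUnion_null fun k => ?_)
  rw [Measure.addHaar_smul_of_nonneg volume (by positivity) T, halfcone_null hn hR hA h, mul_zero]

set_option maxHeartbeats 1000000 in
theorem stmt_15 (n : ℕ) (hn : 1 ≤ n) (K : Set (EuclideanSpace ℝ (Fin n)))
    (hKcomp : IsCompact K) (hKconv : Convex ℝ K)
    (r : ℝ) (hr : 0 < r)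
    (hball : Metric.closedBall (0 : EuclideanSpace ℝ (Fin n)) r ⊆ interior K)
    (ω : Set (EuclideanSpace ℝ (Fin n))) (hω : IsClosed ω)
    (hωs : ω ⊆ Metric.sphere (0 : EuclideanSpace ℝ (Fin n)) 1)
    -- the surface area measure of `K` vanishes on `ω`
    (hSK : μH[(n:ℝ)-1] {x ∈ frontier K | ∃ u ∈ ω, ∀ y ∈ K, ⟪y, u⟫ ≤ ⟪x, u⟫} = 0) :
    Filter.Tendsto
      (fun t : ℝ =>
        ((MeasureTheory.volume {x ∈ K | ∀ u ∈ ω, ⟪x, u⟫ ≤ suppFn K u - t}).toReal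
          - (MeasureTheory.volume K).toReal) / t)
      (𝓝[>] (0:ℝ)) (𝓝 0) := by
  classical
  rcases Set.eq_empty_or_nonempty ω with rfl | hωne
  · -- empty ω
    have hKt : ∀ t : ℝ, {x ∈ K | ∀ u ∈ (∅ : Set (EuclideanSpace ℝ (Fin n))), ⟪x, u⟫ ≤ suppFn K u - t} = K := by
      intro t; ext x; simp
    simp only [hKt, sub_self, zero_div]
    exact tendsto_const_nhds
  -- basic facts
  have hKcl : IsClosed K := hKcomp.isClosed
  have h0int : (0:EuclideanSpace ℝ (Fin n)) ∈ interior K := hball (mem_closedBall_self hr.le)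
  have hK0 : (0:EuclideanSpace ℝ (Fin n)) ∈ K := interior_subset h0int
  have hKne : K.Nonempty := ⟨0, hK0⟩
  have hK_nhds : K ∈ 𝓝 (0:EuclideanSpace ℝ (Fin n)) :=
    mem_nhds_iff.mpr ⟨interior K, interior_subset, isOpen_interior, h0int⟩
  obtain ⟨R₀, hR₀K⟩ := hKcomp.isBounded.subset_closedBall 0
  set R : ℝ := max R₀ 1 with hRdef
  have hRpos : (0:ℝ) < R := lt_of_lt_of_le one_pos (le_max_right _ _)
  have hKR : K ⊆ closedBall 0 R := hR₀K.trans (closedBall_subset_closedBall (le_max_left _ _))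
  have hnormK : ∀ x ∈ K, ‖x‖ ≤ R := fun x hx => by
    have := hKR hx; rwa [mem_closedBall, dist_zero_right] at this
  -- support function facts
  have hcont_inner : ∀ u : EuclideanSpace ℝ (Fin n),
      Continuous (fun x : EuclideanSpace ℝ (Fin n) => ⟪x, u⟫) :=
    fun u => continuous_id.inner continuous_const
  have hbdd : ∀ u : EuclideanSpace ℝ (Fin n), BddAbove ((fun x => ⟪x, u⟫) '' K) :=
    fun u => (hKcomp.image (hcont_inner u)).bddAbove
  have hsupp_mem : ∀ (u : EuclideanSpace ℝ (Fin n)), ∀ y ∈ K, ⟪y, u⟫ ≤ suppFn K u :=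
    fun u y hy => le_csSup (hbdd u) ⟨y, hy, rfl⟩
  have hunit : ∀ u ∈ ω, ‖u‖ = 1 := fun u hu => by
    have := hωs hu; rwa [mem_sphere, dist_zero_right] at this
  have hsupp_r : ∀ u ∈ ω, r ≤ suppFn K u := by
    intro u hu
    have hmem : r • u ∈ K := interior_subset (hball (by
      rw [mem_closedBall, dist_zero_right, norm_smul, Real.norm_eq_abs, abs_of_pos hr,
        hunit u hu, mul_one]))
    have := hsupp_mem u _ hmem
    rwa [real_inner_smul_left, real_inner_self_eq_norm_sq, hunit u hu, one_pow, mul_one] at this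
  have hsupp_le : ∀ u : EuclideanSpace ℝ (Fin n), ‖u‖ = 1 → suppFn K u ≤ R := by
    intro u hu
    refine csSup_le (hKne.image _) ?_
    rintro b ⟨y, hy, rfl⟩
    calc ⟪y,u⟫ ≤ ‖y‖ * ‖u‖ := real_inner_le_norm _ _
      _ ≤ R := by rw [hu, mul_one]; exact hnormK y hy
  -- gauge facts
  have habs : Absorbent ℝ K := absorbent_nhds_zero hK_nhds
  have hvnb : Bornology.IsVonNBounded ℝ K := (NormedSpace.isVonNBounded_iff ℝ).mpr hKcomp.isBounded
  have hg_cont : Continuous (gauge K) := continuous_gauge hKconv hK_nhds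
  have hg_pos : ∀ x : EuclideanSpace ℝ (Fin n), x ≠ 0 → 0 < gauge K x :=
    fun x hx => (gauge_pos habs hvnb).mpr hx
  have hg_mem : ∀ x ∈ K, gauge K x ≤ 1 := fun x hx => gauge_le_one_of_mem hx
  have hmem_of_g : ∀ x : EuclideanSpace ℝ (Fin n), gauge K x ≤ 1 → x ∈ K := by
    intro x hx
    have := (gauge_le_one_iff_mem_closure hKconv hK_nhds).mp hx
    rwa [hKcl.closure_eq] at this
  -- the function f
  set f : EuclideanSpace ℝ (Fin n) → ℝ :=
    fun y => sSup ((fun u => ⟪y, u⟫ - suppFn K u) '' ω) with hfdef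
  have hfbdd : ∀ y : EuclideanSpace ℝ (Fin n), BddAbove ((fun u => ⟪y, u⟫ - suppFn K u) '' ω) := by
    intro y
    refine ⟨‖y‖, ?_⟩
    rintro b ⟨u, hu, rfl⟩
    have h1 : ⟪y,u⟫ ≤ ‖y‖ := by
      calc ⟪y,u⟫ ≤ ‖y‖ * ‖u‖ := real_inner_le_norm _ _
        _ = ‖y‖ := by rw [hunit u hu, mul_one]
    have h2 := hsupp_r u hu
    simp only [mem_upperBounds]
    linarith
  have hf_ge : ∀ (y : EuclideanSpace ℝ (Fin n)), ∀ u ∈ ω, ⟪y,u⟫ - suppFn K u ≤ f y :=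
    fun y u hu => le_csSup (hfbdd y) ⟨u, hu, rfl⟩
  have hf_lip : ∀ y z : EuclideanSpace ℝ (Fin n), f y ≤ f z + ‖y - z‖ := by
    intro y z
    refine csSup_le (hωne.image _) ?_
    rintro b ⟨u, hu, rfl⟩
    show ⟪y,u⟫ - suppFn K u ≤ f z + ‖y - z‖
    have h1 : ⟪y,u⟫ - ⟪z,u⟫ ≤ ‖y - z‖ := by
      rw [← inner_sub_left]
      calc ⟪y-z,u⟫ ≤ ‖y-z‖ * ‖u‖ := real_inner_le_norm _ _
        _ = ‖y-z‖ := by rw [hunit u hu, mul_one]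
    have h2 := hf_ge z u hu
    linarith
  have hf_cont : Continuous f := by
    refine Metric.continuous_iff.mpr fun y ε hε => ⟨ε, hε, fun z hz => ?_⟩
    have h1 := hf_lip z y
    have h2 := hf_lip y z
    rw [dist_eq_norm] at hz ⊢
    rw [Real.norm_eq_abs, abs_lt]
    have h3 : ‖y - z‖ = ‖z - y‖ := norm_sub_rev _ _
    constructor <;> [linarith [h3 ▸ hz]; linarith [norm_sub_rev z y ▸ hz]]
  -- suppFn continuity in u and attainment
  have hsupp_lip : ∀ u v : EuclideanSpace ℝ (Fin n), suppFn K u ≤ suppFn K v + R * ‖u - v‖ := by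
    intro u v
    refine csSup_le (hKne.image _) ?_
    rintro b ⟨y, hy, rfl⟩
    show ⟪y,u⟫ ≤ suppFn K v + R * ‖u - v‖
    have h1 : ⟪y,u⟫ - ⟪y,v⟫ ≤ R * ‖u - v‖ := by
      rw [← inner_sub_right]
      calc ⟪y,u-v⟫ ≤ ‖y‖ * ‖u-v‖ := real_inner_le_norm _ _
        _ ≤ R * ‖u-v‖ := by
            apply mul_le_mul_of_nonneg_right (hnormK y hy) (norm_nonneg _)
    have h2 := hsupp_mem v y hy
    linarith
  have hsupp_cont : Continuous (suppFn K) := by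
    refine Metric.continuous_iff.mpr fun y ε hε => ⟨ε / (R+1), by positivity, fun z hz => ?_⟩
    have h1 := hsupp_lip z y
    have h2 := hsupp_lip y z
    rw [dist_eq_norm] at hz ⊢
    rw [Real.norm_eq_abs, abs_lt]
    have h3 : ‖z - y‖ = ‖y - z‖ := norm_sub_rev _ _
    have h4 : R * ‖z - y‖ < ε := by
      calc R * ‖z-y‖ ≤ R * (ε/(R+1)) := by
            apply mul_le_mul_of_nonneg_left hz.le hRpos.le
        _ < ε := by
            rw [mul_div_assoc']
            rw [div_lt_iff₀ (by linarith)]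
            nlinarith
    constructor <;> [linarith [h3 ▸ h4]; linarith [h3 ▸ h4]]
  have hωcpt : IsCompact ω := (isCompact_sphere 0 1).of_isClosed_subset hω hωs
  have hf_attain : ∀ y : EuclideanSpace ℝ (Fin n), ∃ u ∈ ω, f y = ⟪y,u⟫ - suppFn K u := by
    intro y
    obtain ⟨u₀, hu₀, hmax⟩ := hωcpt.exists_isMaxOn hωne
      ((continuous_const.inner continuous_id).sub hsupp_cont).continuousOn
    refine ⟨u₀, hu₀, le_antisymm ?_ (hf_ge y u₀ hu₀)⟩
    refine csSup_le (hωne.image _) ?_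
    rintro b ⟨u, hu, rfl⟩
    have := hmax hu
    simpa using this
  -- φ and the sets C t
  set φ : EuclideanSpace ℝ (Fin n) → ℝ :=
    fun x => f ((gauge K x)⁻¹ • x) with hφdef
  have hφ_contOn : ContinuousOn φ {x : EuclideanSpace ℝ (Fin n) | x ≠ 0} := by
    apply hf_cont.comp_continuousOn
    exact ((hg_cont.continuousOn.inv₀ fun x hx => (hg_pos x hx).ne').smul continuousOn_id)
  set C : ℝ → Set (EuclideanSpace ℝ (Fin n)) :=
    fun t => {x | x ≠ 0 ∧ gauge K x ≤ 1 ∧ -t < φ x} with hCdef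
  have hCopen : ∀ t : ℝ, IsOpen {x : EuclideanSpace ℝ (Fin n) | x ≠ 0 ∧ -t < φ x} := by
    intro t
    have : {x : EuclideanSpace ℝ (Fin n) | x ≠ 0 ∧ -t < φ x}
        = {x : EuclideanSpace ℝ (Fin n) | x ≠ 0} ∩ φ ⁻¹' (Ioi (-t)) := by
      ext x; simp only [mem_setOf_eq, mem_inter_iff, mem_preimage, mem_Ioi]
    rw [this]
    exact hφ_contOn.isOpen_inter_preimage isOpen_ne isOpen_Ioi
  have hCmeas : ∀ t : ℝ, MeasurableSet (C t) := by
    intro t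
    have : C t = {x : EuclideanSpace ℝ (Fin n) | x ≠ 0 ∧ -t < φ x}
        ∩ (gauge K) ⁻¹' (Iic 1) := by
      ext x
      simp only [hCdef, mem_setOf_eq, mem_inter_iff, mem_preimage, mem_Iic]
      tauto
    rw [this]
    exact (hCopen t).measurableSet.inter (hg_cont.measurable measurableSet_Iic)
  have hCsubK : ∀ t : ℝ, C t ⊆ K := fun t x hx => hmem_of_g x hx.2.1
  have hCfin : ∀ t : ℝ, volume (C t) < ⊤ :=
    fun t => lt_of_le_of_lt (measure_mono (hCsubK t)) hKcomp.measure_lt_top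
  have hCmono : ∀ {t t' : ℝ}, t ≤ t' → C t ⊆ C t' := by
    intro t t' htt x hx
    exact ⟨hx.1, hx.2.1, lt_of_le_of_lt (by linarith) hx.2.2⟩
  -- scaling of φ
  have hφ_smul : ∀ (c : ℝ), 0 < c → ∀ (x : EuclideanSpace ℝ (Fin n)), x ≠ 0 →
      φ (c • x) = φ x := by
    intro c hc x hx
    have hgs : gauge K (c • x) = c * gauge K x := gauge_smul_of_nonneg hc.le x
    rw [hφdef]
    simp only
    rw [hgs, mul_inv, smul_smul]
    congr 1
    rw [mul_comm c⁻¹ (gauge K x)⁻¹, mul_assoc, inv_mul_cancel₀ hc.ne', mul_one]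
  -- the sets E t and the inclusion of the defect set
  set E : ℝ → Set (EuclideanSpace ℝ (Fin n)) :=
    fun t => {x | x ≠ 0 ∧ gauge K x ≤ 1 - 2*t/r ∧ -t < φ x} with hEdef
  have hEmeas : ∀ t : ℝ, MeasurableSet (E t) := by
    intro t
    have : E t = {x : EuclideanSpace ℝ (Fin n) | x ≠ 0 ∧ -t < φ x}
        ∩ (gauge K) ⁻¹' (Iic (1 - 2*t/r)) := by
      ext x
      simp only [hEdef, mem_setOf_eq, mem_inter_iff, mem_preimage, mem_Iic]
      tauto
    rw [this]
    exact (hCopen t).measurableSet.inter (hg_cont.measurable measurableSet_Iic)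
  have hEsubC : ∀ t : ℝ, 0 < t → E t ⊆ C t := by
    intro t ht x hx
    refine ⟨hx.1, le_trans hx.2.1 ?_, hx.2.2⟩
    have : 0 < 2*t/r := by positivity
    linarith
  -- main inclusion: K \ K(t) ⊆ C t \ E t
  have hmain : ∀ t : ℝ, 0 < t → t < r/2 →
      K \ {x ∈ K | ∀ u ∈ ω, ⟪x, u⟫ ≤ suppFn K u - t} ⊆ C t \ E t := by
    intro t ht htr x hx
    obtain ⟨hxK, hxn⟩ := hx
    have : ∃ u ∈ ω, suppFn K u - t < ⟪x,u⟫ := by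
      by_contra hcon
      push_neg at hcon
      exact hxn ⟨hxK, fun u hu => (hcon u hu)⟩
    obtain ⟨u, hu, hxu⟩ := this
    have hru : r ≤ suppFn K u := hsupp_r u hu
    have hxupos : 0 < ⟪x,u⟫ := by linarith
    have hx0 : x ≠ 0 := by
      intro h0
      rw [h0, inner_zero_left] at hxupos
      linarith
    set g := gauge K x with hgdef
    have hgpos : 0 < g := hg_pos x hx0
    have hgle : g ≤ 1 := hg_mem x hxK
    set p : EuclideanSpace ℝ (Fin n) := g⁻¹ • x with hpdef
    have hgp : gauge K p = 1 := by
      rw [hpdef, gauge_smul_of_nonneg (by positivity), smul_eq_mul, ← hgdef,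
        inv_mul_cancel₀ hgpos.ne']
    have hpK : p ∈ K := hmem_of_g p hgp.le
    have hpu : ⟪p,u⟫ ≤ suppFn K u := hsupp_mem u p hpK
    have hpinner : ⟪p,u⟫ = g⁻¹ * ⟪x,u⟫ := real_inner_smul_left _ _ _
    have hxgu : ⟪x,u⟫ ≤ g * suppFn K u := by
      have h1 : g⁻¹ * ⟪x,u⟫ ≤ suppFn K u := hpinner ▸ hpu
      calc ⟪x,u⟫ = g * (g⁻¹ * ⟪x,u⟫) := by field_simp
        _ ≤ g * suppFn K u := by
            apply mul_le_mul_of_nonneg_left h1 hgpos.le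
    have hglow : 1 - 2*t/r < g := by
      have hgu : (suppFn K u - t) / suppFn K u < g := by
        rw [div_lt_iff₀ (by linarith)]
        calc suppFn K u - t < ⟪x,u⟫ := hxu
          _ ≤ g * suppFn K u := hxgu
      have h1 : 1 - t/r ≤ (suppFn K u - t)/(suppFn K u) := by
        rw [le_div_iff₀ (by linarith)]
        have h2 : t * (suppFn K u) ≤ t * (suppFn K u) := le_refl _
        have h3 : t/r * suppFn K u ≥ t := by
          rw [ge_iff_le, div_mul_eq_mul_div, le_div_iff₀ hr]
          nlinarith
        nlinarith
      have h4 : 1 - 2*t/r < 1 - t/r := by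
        have htr0 : 0 < t/r := by positivity
        have h5 : 2*t/r = 2*(t/r) := by ring
        linarith
      linarith
    have hφx : -t < φ x := by
      have h1 : φ x = f p := rfl
      have h2 : ⟪p,u⟫ - suppFn K u ≤ f p := hf_ge p u hu
      have h3 : ⟪x,u⟫ ≤ ⟪p,u⟫ := by
        rw [hpinner]
        calc ⟪x,u⟫ = 1 * ⟪x,u⟫ := (one_mul _).symm
          _ ≤ g⁻¹ * ⟪x,u⟫ :=
              mul_le_mul_of_nonneg_right ((one_le_inv₀ hgpos).mpr hgle) hxupos.le
      rw [h1]
      linarith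
    constructor
    · exact ⟨hx0, hgle, hφx⟩
    · intro hE
      have := hE.2.1
      rw [← hgdef] at this
      linarith
  -- scaling inclusion
  have hscale : ∀ t : ℝ, 0 < t → t < r/2 →
      ((1 - 2*t/r) • C t : Set (EuclideanSpace ℝ (Fin n))) ⊆ E t := by
    intro t ht htr y hy
    rw [mem_smul_set] at hy
    obtain ⟨x, hx, rfl⟩ := hy
    obtain ⟨hx1, hx2, hx3⟩ := hx
    have hc : 0 < 1 - 2*t/r := by
      have : 2*t/r < 1 := by rw [div_lt_one hr]; linarith
      linarith
    refine ⟨smul_ne_zero hc.ne' hx1, ?_, ?_⟩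
    · rw [gauge_smul_of_nonneg hc.le, smul_eq_mul]
      calc (1-2*t/r) * gauge K x ≤ (1-2*t/r) * 1 :=
            mul_le_mul_of_nonneg_left hx2 hc.le
        _ = 1 - 2*t/r := mul_one _
    · rw [hφ_smul _ hc x hx1]
      exact hx3
  -- the set K(t)
  set Kt : ℝ → Set (EuclideanSpace ℝ (Fin n)) :=
    fun t => {x ∈ K | ∀ u ∈ ω, ⟪x, u⟫ ≤ suppFn K u - t} with hKtdef
  have hKtcl : ∀ t : ℝ, IsClosed (Kt t) := by
    intro t
    have : Kt t = K ∩ ⋂ u ∈ ω, {x : EuclideanSpace ℝ (Fin n) | ⟪x,u⟫ ≤ suppFn K u - t} := by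
      ext x
      simp only [hKtdef, mem_setOf_eq, mem_inter_iff, mem_iInter]
    rw [this]
    exact hKcl.inter (isClosed_biInter fun u _ => isClosed_le (hcont_inner u) continuous_const)
  have hKtsub : ∀ t : ℝ, Kt t ⊆ K := fun t x hx => hx.1
  have hKfin : volume K ≠ ⊤ := hKcomp.measure_lt_top.ne
  -- the key volume estimate
  have hkey : ∀ t : ℝ, 0 < t → t < r/2 →
      (volume K).toReal - (volume (Kt t)).toReal ≤ (2*n/r*t) * (volume (C t)).toReal := by
    intro t ht htr
    have hc : 0 < 1 - 2*t/r := by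
      have : 2*t/r < 1 := by rw [div_lt_one hr]; linarith
      linarith
    have hEfin : volume (E t) ≠ ⊤ :=
      (lt_of_le_of_lt (measure_mono (hEsubC t ht)) (hCfin t)).ne
    have hd1 : volume (K \ Kt t) = volume K - volume (Kt t) :=
      measure_diff (hKtsub t) (hKtcl t).measurableSet.nullMeasurableSet
        (lt_of_le_of_lt (measure_mono (hKtsub t)) hKcomp.measure_lt_top).ne
    have hd2 : volume (C t \ E t) = volume (C t) - volume (E t) :=
      measure_diff (hEsubC t ht) (hEmeas t).nullMeasurableSet hEfin
    have hle1 : volume (K \ Kt t) ≤ volume (C t) - volume (E t) := by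
      rw [← hd2]
      exact measure_mono (hmain t ht htr)
    have hle2 : ENNReal.ofReal ((1 - 2*t/r)^n) * volume (C t) ≤ volume (E t) := by
      calc ENNReal.ofReal ((1 - 2*t/r)^n) * volume (C t)
          = volume (((1 - 2*t/r) • C t : Set (EuclideanSpace ℝ (Fin n)))) := by
            rw [Measure.addHaar_smul_of_nonneg volume hc.le,
              finrank_euclideanSpace_fin]
        _ ≤ volume (E t) := measure_mono (hscale t ht htr)
    -- to real numbers
    have hCfin' : volume (C t) ≠ ⊤ := (hCfin t).ne
    have htr1 : (volume K).toReal - (volume (Kt t)).toReal = (volume (K \ Kt t)).toReal := by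
      rw [hd1, ENNReal.toReal_sub_of_le (measure_mono (hKtsub t)) hKfin]
    have htr2 : (volume (K \ Kt t)).toReal ≤ (volume (C t)).toReal - (volume (E t)).toReal := by
      have h1 : volume (C t) - volume (E t) ≠ ⊤ :=
        (lt_of_le_of_lt (le_trans tsub_le_self (le_refl _)) (hCfin t)).ne
      have := ENNReal.toReal_mono h1 hle1
      rwa [ENNReal.toReal_sub_of_le (measure_mono (hEsubC t ht)) hCfin'] at this
    have htr3 : (1 - 2*t/r)^n * (volume (C t)).toReal ≤ (volume (E t)).toReal := by
      have := ENNReal.toReal_mono hEfin hle2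
      rwa [ENNReal.toReal_mul, ENNReal.toReal_ofReal (by positivity)] at this
    have hbern : 1 - (n:ℝ)*(2*t/r) ≤ (1 - 2*t/r)^n := by
      have := one_add_mul_le_pow (show (-2:ℝ) ≤ -(2*t/r) by
        have h1 : 2*t/r ≤ 2 := by
          rw [div_le_iff₀ hr]; nlinarith
        linarith) n
      rw [show (1:ℝ) + -(2*t/r) = 1 - 2*t/r by ring] at this
      rw [show (1:ℝ) + (n:ℝ)*(-(2*t/r)) = 1 - n*(2*t/r) by ring] at this
      exact this
    have hCnn : 0 ≤ (volume (C t)).toReal := ENNReal.toReal_nonneg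
    calc (volume K).toReal - (volume (Kt t)).toReal
        = (volume (K \ Kt t)).toReal := htr1
      _ ≤ (volume (C t)).toReal - (volume (E t)).toReal := htr2
      _ ≤ (volume (C t)).toReal - (1 - 2*t/r)^n * (volume (C t)).toReal := by linarith
      _ = (1 - (1 - 2*t/r)^n) * (volume (C t)).toReal := by ring
      _ ≤ ((n:ℝ)*(2*t/r)) * (volume (C t)).toReal := by
          apply mul_le_mul_of_nonneg_right ?_ hCnn
          linarith
      _ = (2*n/r*t) * (volume (C t)).toReal := by
          congr 1
          field_simp
  -- the limit set C0 is null
  set C0 : Set (EuclideanSpace ℝ (Fin n)) := {x | x ≠ 0 ∧ gauge K x ≤ 1 ∧ 0 ≤ φ x} with hC0def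
  set F' : Set (EuclideanSpace ℝ (Fin n)) := {y | gauge K y = 1 ∧ 0 ≤ f y} with hF'def
  have hF'sub : F' ⊆ {x ∈ frontier K | ∃ u ∈ ω, ∀ y ∈ K, ⟪y, u⟫ ≤ ⟪x, u⟫} := by
    intro y hy
    obtain ⟨hy1, hy2⟩ := hy
    have hyK : y ∈ K := hmem_of_g y hy1.le
    have hynot : y ∉ interior K := by
      intro hin
      have := interior_subset_gauge_lt_one K hin
      rw [mem_setOf_eq, hy1] at this
      exact lt_irrefl 1 this
    have hyfr : y ∈ frontier K := by
      rw [hKcl.frontier_eq]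
      exact ⟨hyK, hynot⟩
    obtain ⟨u, hu, heq⟩ := hf_attain y
    refine ⟨hyfr, u, hu, fun z hz => ?_⟩
    have h1 : suppFn K u ≤ ⟪y,u⟫ := by
      have := heq ▸ hy2
      linarith
    exact le_trans (hsupp_mem u z hz) h1
  have hF'null : μH[(n:ℝ)-1] F' = 0 := measure_mono_null hF'sub hSK
  have hF'R : F' ⊆ closedBall 0 R := fun y hy => hKR (hmem_of_g y hy.1.le)
  have hC0sub : C0 ⊆ ⋃ s ∈ Ioc (0:ℝ) 1, (s • F' : Set (EuclideanSpace ℝ (Fin n))) := by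
    intro x hx
    obtain ⟨hx1, hx2, hx3⟩ := hx
    have hgpos : 0 < gauge K x := hg_pos x hx1
    simp only [mem_iUnion]
    refine ⟨gauge K x, ⟨hgpos, hx2⟩, ?_⟩
    rw [mem_smul_set]
    refine ⟨(gauge K x)⁻¹ • x, ⟨?_, hx3⟩, ?_⟩
    · rw [gauge_smul_of_nonneg (by positivity), smul_eq_mul, inv_mul_cancel₀ hgpos.ne']
    · rw [smul_smul, mul_inv_cancel₀ hgpos.ne', one_smul]
  have hC0null : volume C0 = 0 :=
    measure_mono_null hC0sub (cone_null hn hRpos hF'R hF'null)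
  -- continuity from above
  have hInter : ⋂ k : ℕ, C (1/((k:ℝ)+1)) = C0 := by
    ext x
    simp only [mem_iInter]
    constructor
    · intro hx
      obtain ⟨hx1, hx2, _⟩ := hx 0
      refine ⟨hx1, hx2, ?_⟩
      by_contra hneg
      push_neg at hneg
      obtain ⟨k, hk⟩ := exists_nat_one_div_lt (show (0:ℝ) < -φ x by linarith)
      have := (hx k).2.2
      linarith
    · intro hx k
      have h1 : (0:ℝ) < 1/((k:ℝ)+1) := by positivity
      exact ⟨hx.1, hx.2.1, lt_of_lt_of_le (by linarith) hx.2.2⟩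
  have htendC : Tendsto (fun k : ℕ => volume (C (1/((k:ℝ)+1)))) atTop (𝓝 0) := by
    have := tendsto_measure_iInter_atTop (μ := volume)
      (s := fun k : ℕ => C (1/((k:ℝ)+1)))
      (fun k => (hCmeas _).nullMeasurableSet)
      (fun k m hkm => hCmono (by
        apply div_le_div_of_nonneg_left one_pos.le (by positivity) ?_
        exact_mod_cast Nat.add_le_add_right hkm 1))
      ⟨0, (hCfin _).ne⟩
    rw [hInter, hC0null] at this
    exact this
  -- final limit
  rw [Metric.tendsto_nhds]
  intro ε hε
  have hδ'pos : (0:ℝ≥0∞) < ENNReal.ofReal (ε*r/(2*(n:ℝ)+2)) := by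
    rw [ENNReal.ofReal_pos]
    positivity
  obtain ⟨k, hk⟩ := (htendC.eventually_lt_const hδ'pos).exists
  set δ : ℝ := min (1/((k:ℝ)+1)) (r/2) with hδdef
  have hδpos : 0 < δ := lt_min (by positivity) (by positivity)
  have hIoo : Ioo (0:ℝ) δ ∈ 𝓝[>] (0:ℝ) := Ioo_mem_nhdsGT_of_mem ⟨le_refl 0, hδpos⟩
  filter_upwards [hIoo] with t ht
  obtain ⟨ht0, htδ⟩ := ht
  have htr2 : t < r/2 := lt_of_lt_of_le htδ (min_le_right _ _)
  have htk : t ≤ 1/((k:ℝ)+1) := le_of_lt (lt_of_lt_of_le htδ (min_le_left _ _))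
  have hKtle : (volume (Kt t)).toReal ≤ (volume K).toReal :=
    ENNReal.toReal_mono hKfin (measure_mono (hKtsub t))
  have hCle : (volume (C t)).toReal ≤ (volume (C (1/((k:ℝ)+1)))).toReal :=
    ENNReal.toReal_mono (hCfin _).ne (measure_mono (hCmono htk))
  have hCk : (volume (C (1/((k:ℝ)+1)))).toReal < ε*r/(2*(n:ℝ)+2) := by
    rw [← ENNReal.lt_ofReal_iff_toReal_lt (hCfin _).ne]
    exact hk
  rw [Real.dist_eq, sub_zero]
  have hq : |((volume (Kt t)).toReal - (volume K).toReal) / t|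
      = ((volume K).toReal - (volume (Kt t)).toReal) / t := by
    rw [abs_div, abs_of_pos ht0, abs_of_nonpos (by linarith), neg_sub]
  rw [hq]
  have hb := hkey t ht0 htr2
  calc ((volume K).toReal - (volume (Kt t)).toReal) / t
      ≤ ((2*(n:ℝ)/r*t) * (volume (C t)).toReal) / t := by
        gcongr
    _ = (2*(n:ℝ)/r) * (volume (C t)).toReal := by
        field_simp
    _ ≤ (2*(n:ℝ)/r) * (volume (C (1/((k:ℝ)+1)))).toReal := by
        apply mul_le_mul_of_nonneg_left hCle (by positivity)
    _ ≤ (2*(n:ℝ)/r) * (ε*r/(2*(n:ℝ)+2)) := by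
        apply mul_le_mul_of_nonneg_left hCk.le (by positivity)
    _ = ε * (2*(n:ℝ)/(2*(n:ℝ)+2)) := by
        field_simp
    _ < ε := by
        have h1 : 2*(n:ℝ)/(2*(n:ℝ)+2) < 1 := by
          rw [div_lt_one (by positivity)]
          linarith
        nlinarith
end

section
/- Let K be a convex body in ℝⁿ, σ = ϱ w with ϱ ≥ 0 and w ∈ S^{n-1}, and suppose σ + r₀ B^n ⊆ K for some r₀ > 0. Let Ξ = ∂K ∩ (σ + r₀ B^♯ + (0,∞)w), where B^♯ = w^⊥ ∩ int B^n. Then every exterior unit normal u of K at a point of Ξ satisfies ⟨u, w⟩ ≥ 0, and consequently S_K(Ω(w, π/2)) ≥ r₀^{n-1} κ_{n-1}, where Ω(w, π/2) = {u ∈ S^{n-1} : ⟨u,w⟩ ≥ 0}. -/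
open MeasureTheory Set Metric
open scoped RealInnerProductSpace

lemma vol_le_hausdorff (m : ℕ) (s : Set (EuclideanSpace ℝ (Fin m)))
    (hs : MeasurableSet s) : volume s ≤ μH[(m:ℝ)] s := by
  have h1 : volume s = volume ((WithLp.equiv 2 (Fin m → ℝ)) '' s) := by
    rw [Equiv.image_eq_preimage_symm]
    exact ((PiLp.volume_preserving_toLp (Fin m)).measure_preimage
      hs.nullMeasurableSet).symm
  have h2 : (volume : Measure (Fin m → ℝ)) = μH[(m:ℝ)] := by
    have := MeasureTheory.hausdorffMeasure_pi_real (ι := Fin m)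
    rw [Fintype.card_fin] at this
    exact this.symm
  rw [h1, h2]
  have h3 := (PiLp.lipschitzWith_ofLp 2 (fun _ : Fin m => ℝ)).hausdorffMeasure_image_le
    (by positivity : (0:ℝ) ≤ (m:ℝ)) s
  simpa using h3

set_option maxHeartbeats 1000000 in
theorem stmt_18 (n : ℕ) (hn : 1 ≤ n) (K : Set (EuclideanSpace ℝ (Fin n)))
    (hKcomp : IsCompact K) (hKconv : Convex ℝ K)
    (r₀ ϱ : ℝ) (hr₀ : 0 < r₀) (hϱ : 0 ≤ ϱ)
    (w : EuclideanSpace ℝ (Fin n)) (hw : ‖w‖ = 1)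
    (hball : Metric.closedBall (ϱ • w) r₀ ⊆ K) :
    -- all exterior unit normals along `Ξ` lie in the closed hemisphere around `w` …
    (∀ x ∈ frontier K,
      (∃ y : EuclideanSpace ℝ (Fin n), ⟪y, w⟫ = 0 ∧ ‖y‖ < r₀ ∧
        ∃ s > (0:ℝ), x = ϱ • w + y + s • w) →
      ∀ u : EuclideanSpace ℝ (Fin n), ‖u‖ = 1 → (∀ z ∈ K, ⟪z, u⟫ ≤ ⟪x, u⟫) →
        0 ≤ ⟪u, w⟫) ∧
    -- … and consequently the surface area measure of the hemisphere is at least r₀^{n-1} κ_{n-1}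
    μH[(n:ℝ)-1] {x ∈ frontier K |
        ∃ u : EuclideanSpace ℝ (Fin n), ‖u‖ = 1 ∧ 0 ≤ ⟪u, w⟫ ∧
          ∀ z ∈ K, ⟪z, u⟫ ≤ ⟪x, u⟫}
      ≥ ENNReal.ofReal (r₀ ^ (n - 1) *
          (MeasureTheory.volume (Metric.closedBall (0 : EuclideanSpace ℝ (Fin (n-1))) 1)).toReal) := by
  have hw0 : w ≠ 0 := by
    intro h; rw [h, norm_zero] at hw; norm_num at hw
  have hww : ⟪w, w⟫ = 1 := by
    rw [real_inner_self_eq_norm_sq, hw]; norm_num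
  -- Part 1
  have part1 : ∀ x ∈ frontier K,
      (∃ y : EuclideanSpace ℝ (Fin n), ⟪y, w⟫ = 0 ∧ ‖y‖ < r₀ ∧
        ∃ s > (0:ℝ), x = ϱ • w + y + s • w) →
      ∀ u : EuclideanSpace ℝ (Fin n), ‖u‖ = 1 → (∀ z ∈ K, ⟪z, u⟫ ≤ ⟪x, u⟫) →
        0 ≤ ⟪u, w⟫ := by
    rintro x hx ⟨y, hy0, hyr, s, hs, rfl⟩ u hu hsup
    set ε := r₀ - ‖y‖ with hε
    have hε0 : 0 < ε := by simp only [hε]; linarith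
    have huu : ⟪u, u⟫ = 1 := by rw [real_inner_self_eq_norm_sq, hu]; norm_num
    have hz : ϱ • w + y + ε • u ∈ K := by
      apply hball
      rw [mem_closedBall, dist_eq_norm]
      have h1 : ϱ • w + y + ε • u - ϱ • w = y + ε • u := by abel
      rw [h1]
      calc ‖y + ε • u‖ ≤ ‖y‖ + ‖ε • u‖ := norm_add_le _ _
        _ = ‖y‖ + ε := by rw [norm_smul, hu, Real.norm_eq_abs, abs_of_pos hε0, mul_one]
        _ = r₀ := by simp [hε]
    have h2 := hsup _ hz
    simp only [inner_add_left, real_inner_smul_left, huu] at h2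
    have hwu : 0 < ⟪w, u⟫ := by nlinarith
    rw [real_inner_comm]
    nlinarith
  refine ⟨part1, ?_⟩
  -- Part 2
  set Ξ : Set (EuclideanSpace ℝ (Fin n)) := {x ∈ frontier K |
      ∃ u : EuclideanSpace ℝ (Fin n), ‖u‖ = 1 ∧ 0 ≤ ⟪u, w⟫ ∧ ∀ z ∈ K, ⟪z, u⟫ ≤ ⟪x, u⟫} with hΞ
  set d : ℝ := (n:ℝ) - 1 with hd
  have hd0 : 0 ≤ d := by
    have : (1:ℝ) ≤ (n:ℝ) := by exact_mod_cast hn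
    simp only [hd]; linarith
  -- the projection onto w^⊥
  set p : EuclideanSpace ℝ (Fin n) → EuclideanSpace ℝ (Fin n) := fun x => x - ⟪x, w⟫ • w with hp
  have hplip : LipschitzWith 1 p := by
    apply LipschitzWith.of_dist_le_mul
    intro a b
    simp only [NNReal.coe_one, one_mul, dist_eq_norm]
    have hdiff : p a - p b = (a - b) - ⟪a - b, w⟫ • w := by
      simp only [hp, inner_sub_left, sub_smul]; abel
    rw [hdiff]
    have hsq : ‖(a - b) - ⟪a - b, w⟫ • w‖ ^ 2 = ‖a - b‖ ^ 2 - ⟪a - b, w⟫ ^ 2 := by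
      rw [norm_sub_sq_real, real_inner_smul_right, norm_smul, Real.norm_eq_abs, hw]
      ring_nf
      rw [sq_abs]
      ring
    nlinarith [norm_nonneg ((a - b) - ⟪a - b, w⟫ • w), norm_nonneg (a - b),
      sq_nonneg (⟪a - b, w⟫)]
  -- interior point
  have hint0 : ∀ y : EuclideanSpace ℝ (Fin n), ⟪y, w⟫ = 0 → ‖y‖ < r₀ → ϱ • w + y ∈ interior K := by
    intro y hy0 hyr
    have hb : ball (ϱ • w) r₀ ⊆ K := fun z hz => hball (ball_subset_closedBall hz)
    have : ϱ • w + y ∈ ball (ϱ • w) r₀ := by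
      rw [mem_ball, dist_eq_norm]
      simpa using hyr
    exact interior_maximal hb isOpen_ball this
  -- key surjectivity step
  have key : ∀ y : EuclideanSpace ℝ (Fin n), ⟪y, w⟫ = 0 → ‖y‖ < r₀ → y ∈ p '' Ξ := by
    intro y hy0 hyr
    set T : Set ℝ := {t : ℝ | ϱ • w + y + t • w ∈ K} with hT
    have hcont : Continuous (fun t : ℝ => ϱ • w + y + t • w) := by
      exact continuous_const.add (continuous_id.smul continuous_const)
    have hTc : IsClosed T := hKcomp.isClosed.preimage hcont
    have h0T : (0:ℝ) ∈ T := by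
      show ϱ • w + y + (0:ℝ) • w ∈ K
      rw [zero_smul, add_zero]
      apply hball
      rw [mem_closedBall, dist_eq_norm]
      simpa using hyr.le
    have hbd : BddAbove T := by
      obtain ⟨R, hR⟩ := hKcomp.isBounded.subset_closedBall 0
      refine ⟨R + |ϱ|, fun t ht => ?_⟩
      have h1 : ‖ϱ • w + y + t • w‖ ≤ R := by
        have := hR ht
        rwa [mem_closedBall, dist_zero_right] at this
      have h2 : ⟪ϱ • w + y + t • w, w⟫ = ϱ + t := by
        rw [inner_add_left, inner_add_left, real_inner_smul_left, real_inner_smul_left,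
          hy0, hww]; ring
      have h3 := abs_real_inner_le_norm (ϱ • w + y + t • w) w
      rw [h2, hw, mul_one] at h3
      have h4 : |ϱ + t| ≤ R := h3.trans h1
      have h5 := abs_le.mp h4
      have h6 := neg_abs_le ϱ
      linarith [h5.1, h5.2, h6]
    set s := sSup T with hs
    have hsT : s ∈ T := hTc.csSup_mem ⟨0, h0T⟩ hbd
    have hint : ϱ • w + y ∈ interior K := hint0 y hy0 hyr
    obtain ⟨δ, hδ0, hδ⟩ := Metric.isOpen_iff.mp isOpen_interior _ hint
    have hst : δ/2 ∈ T := by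
      have hmem : ϱ • w + y + (δ/2) • w ∈ ball (ϱ • w + y) δ := by
        rw [mem_ball, dist_eq_norm]
        have h1 : ϱ • w + y + (δ/2) • w - (ϱ • w + y) = (δ/2) • w := by abel
        rw [h1, norm_smul, hw, Real.norm_eq_abs, abs_of_pos (by linarith), mul_one]
        linarith
      show ϱ • w + y + (δ/2) • w ∈ K
      exact interior_subset (hδ hmem)
    have hs0 : 0 < s := lt_of_lt_of_le (by linarith) (le_csSup hbd hst)
    set x := ϱ • w + y + s • w with hx
    have hxK : x ∈ K := hsT
    have hxint : x ∉ interior K := by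
      intro hxi
      obtain ⟨ε, hε0, hε⟩ := Metric.isOpen_iff.mp isOpen_interior _ hxi
      have hmem : ϱ • w + y + (s + ε/2) • w ∈ ball x ε := by
        rw [mem_ball, dist_eq_norm]
        have h1 : ϱ • w + y + (s + ε/2) • w - x = (ε/2) • w := by
          rw [hx, add_smul]; abel
        rw [h1, norm_smul, hw, Real.norm_eq_abs, abs_of_pos (by linarith), mul_one]
        linarith
      have : s + ε/2 ∈ T := by
        show ϱ • w + y + (s + ε/2) • w ∈ K
        exact interior_subset (hε hmem)
      have := le_csSup hbd this
      linarith
    have hxfr : x ∈ frontier K := by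
      rw [frontier, hKcomp.isClosed.closure_eq]
      exact ⟨hxK, hxint⟩
    -- supporting functional
    obtain ⟨f, hf⟩ := geometric_hahn_banach_open_point hKconv.interior isOpen_interior hxint
    set v := (InnerProductSpace.toDual ℝ (EuclideanSpace ℝ (Fin n))).symm f with hv
    have hfv : ∀ z : EuclideanSpace ℝ (Fin n), ⟪v, z⟫ = f z := fun z => InnerProductSpace.toDual_symm_apply
    have hfa : f (ϱ • w + y) < f x := hf _ hint
    have hv0 : v ≠ 0 := by
      intro h0
      have h1 : f (ϱ • w + y) = 0 := by rw [← hfv, h0, inner_zero_left]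
      have h2 : f x = 0 := by rw [← hfv, h0, inner_zero_left]
      rw [h1, h2] at hfa; exact lt_irrefl _ hfa
    set u := ‖v‖⁻¹ • v with hu'
    have hu : ‖u‖ = 1 := by
      rw [hu', norm_smul, norm_inv, norm_norm,
        inv_mul_cancel₀ (norm_ne_zero_iff.mpr hv0)]
    have hfle : ∀ z ∈ K, f z ≤ f x := by
      intro z hz
      by_contra h
      push_neg at h
      set a := ϱ • w + y with ha
      set t : ℝ := (f z - f x) / (f z - f a) with ht
      have h1 : 0 < f z - f a := by linarith
      have ht0 : 0 < t := div_pos (by linarith) h1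
      have ht1 : t ≤ 1 := by
        rw [ht, div_le_one h1]; linarith
      have hmem : (1 - t) • z + t • a ∈ interior K := by
        have := hKconv.combo_closure_interior_mem_interior (subset_closure hz) hint
          (by linarith : (0:ℝ) ≤ 1 - t) ht0 (by ring)
        convert this using 2
      have h2 := hf _ hmem
      simp only [map_add, ContinuousLinearMap.map_smul, smul_eq_mul] at h2
      have h3 : t * (f z - f a) = f z - f x := by
        rw [ht, div_mul_cancel₀ _ h1.ne']
      nlinarith
    have hsup : ∀ z ∈ K, ⟪z, u⟫ ≤ ⟪x, u⟫ := by
      intro z hz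
      rw [hu', real_inner_smul_right, real_inner_smul_right]
      have h1 : ⟪z, v⟫ ≤ ⟪x, v⟫ := by
        rw [real_inner_comm v z, real_inner_comm v x, hfv, hfv]
        exact hfle z hz
      exact mul_le_mul_of_nonneg_left h1 (inv_nonneg.mpr (norm_nonneg v))
    have hpos := part1 x hxfr ⟨y, hy0, hyr, s, hs0, rfl⟩ u hu hsup
    refine ⟨x, ⟨hxfr, u, hu, hpos, hsup⟩, ?_⟩
    have hxw : ⟪x, w⟫ = ϱ + s := by
      rw [hx, inner_add_left, inner_add_left, real_inner_smul_left, real_inner_smul_left,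
        hy0, hww]; ring
    rw [hp]
    simp only [hxw]
    simp only [hx]
    module
  -- the isometric embedding of EuclideanSpace ℝ (Fin (n-1)) onto w^⊥
  haveI hfact : Fact (Module.finrank ℝ (EuclideanSpace ℝ (Fin n)) = (n-1) + 1) := ⟨by
    rw [finrank_euclideanSpace_fin]; omega⟩
  set b := OrthonormalBasis.fromOrthogonalSpanSingleton (𝕜 := ℝ) (n-1) hw0 with hb
  set g : EuclideanSpace ℝ (Fin (n-1)) → EuclideanSpace ℝ (Fin n) :=
    fun a => ((b.repr.symm a : (ℝ ∙ w)ᗮ) : EuclideanSpace ℝ (Fin n)) with hg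
  have hgiso : Isometry g := by
    exact isometry_subtype_coe.comp b.repr.symm.isometry
  have hsub : g '' (ball 0 r₀) ⊆ p '' Ξ := by
    rintro _ ⟨a, ha, rfl⟩
    apply key
    · have hmem := Submodule.mem_orthogonal_singleton_iff_inner_right.mp
        (SetLike.coe_mem (b.repr.symm a))
      rw [real_inner_comm] at hmem
      exact hmem
    · have : ‖g a‖ = ‖a‖ := by
        rw [hg]
        simp only [Submodule.norm_coe]
        exact b.repr.symm.norm_map a
      rw [this]
      rwa [mem_ball_zero_iff] at ha
  -- measure computation
  have hfr : Module.finrank ℝ (EuclideanSpace ℝ (Fin (n-1))) = n - 1 :=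
    finrank_euclideanSpace_fin
  have hclosed_lt : volume (closedBall (0 : EuclideanSpace ℝ (Fin (n-1))) 1) < ⊤ :=
    measure_closedBall_lt_top
  have hstep1 : ENNReal.ofReal (r₀ ^ (n - 1) *
      (volume (closedBall (0 : EuclideanSpace ℝ (Fin (n-1))) 1)).toReal)
      = volume (ball (0 : EuclideanSpace ℝ (Fin (n-1))) r₀) := by
    rw [ENNReal.ofReal_mul (by positivity), ENNReal.ofReal_toReal hclosed_lt.ne]
    rw [Measure.addHaar_ball_of_pos volume 0 hr₀, hfr]
    congr 1
    exact (Measure.addHaar_unitClosedBall_eq_addHaar_unitBall volume)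
  have hcast : ((n - 1 : ℕ) : ℝ) = d := by
    rw [hd, Nat.cast_sub hn, Nat.cast_one]
  have hstep2 : volume (ball (0 : EuclideanSpace ℝ (Fin (n-1))) r₀)
      ≤ μH[d] (ball (0 : EuclideanSpace ℝ (Fin (n-1))) r₀) := by
    rw [← hcast]
    exact vol_le_hausdorff (n-1) _ measurableSet_ball
  have hstep3 : μH[d] (ball (0 : EuclideanSpace ℝ (Fin (n-1))) r₀)
      = μH[d] (g '' (ball 0 r₀)) :=
    (hgiso.hausdorffMeasure_image (Or.inl hd0) _).symm
  have hstep4 : μH[d] (g '' (ball 0 r₀)) ≤ μH[d] (p '' Ξ) := measure_mono hsub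
  have hstep5 : μH[d] (p '' Ξ) ≤ μH[d] Ξ := by
    have := hplip.hausdorffMeasure_image_le hd0 Ξ
    simpa using this
  calc ENNReal.ofReal (r₀ ^ (n - 1) *
      (volume (closedBall (0 : EuclideanSpace ℝ (Fin (n-1))) 1)).toReal)
      = volume (ball (0 : EuclideanSpace ℝ (Fin (n-1))) r₀) := hstep1
    _ ≤ μH[d] (ball (0 : EuclideanSpace ℝ (Fin (n-1))) r₀) := hstep2
    _ = μH[d] (g '' (ball 0 r₀)) := hstep3
    _ ≤ μH[d] (p '' Ξ) := hstep4
    _ ≤ μH[d] Ξ := hstep5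
end
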